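/- Let C be a finite alphabet with |C| = m. If X ⊆ C^ℕ is ω-regular, then the winning shift W(X), viewed as a subset of {0, 1, …, m − 1}^ℕ, is ω-regular. -/

import Mathlib

open scoped BigOperators

/-- A language is regular if it is accepted by a DFA with finitely many states. -/
def IsRegularLang {α : Type*} (L : Set (List α)) : Prop :=
  ∃ (σ : Type) (_ : Fintype σ) (M : DFA α σ), ∀ w : List α, w ∈ M.accepts ↔ w ∈ L

/-- Pad a word over `A` to length `M` by prepending the padding symbol `none`. -/
def padOne {A : Type*} (M : ℕ) (w : List A) : List (Option A) :=
  List.replicate (M - w.length) none ++ w.map some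

/-- The padded form of a `d`-tuple of words over `A`, as a word over `(A ∪ {#})^d`. -/
def padTuple {A : Type*} {d : ℕ} (ws : Fin d → List A) : List (Fin d → Option A) :=
  List.ofFn fun j : Fin (Finset.univ.sup fun i : Fin d => (ws i).length) =>
    fun i : Fin d =>
      (padOne (Finset.univ.sup fun i : Fin d => (ws i).length) (ws i)).getD j.val none

/-- An abstract numeration system over the alphabet `A`, encoded by the order isomorphism
`rep : ℕ → L ⊆ A*` enumerating its (infinite) language in increasing order. -/
structure ANS (A : Type*) where
  rep : ℕ → List A
  inj : Function.Injective rep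

/-- A set `Y ⊆ ℕ^d` is `S`-recognizable if the padded representations of its members form
a regular language. -/
def ANS.Recognizable {A : Type*} (S : ANS A) {d : ℕ} (Y : Set (Fin d → ℕ)) : Prop :=
  IsRegularLang { w : List (Fin d → Option A) | ∃ t ∈ Y, w = padTuple fun i => S.rep (t i) }

/-- An ANS is addable if the graph of addition is `S`-recognizable. -/
def ANS.Addable {A : Type*} (S : ANS A) : Prop :=
  S.Recognizable { t : Fin 3 → ℕ | t 0 + t 1 = t 2 }

/-- An ANS is comparable if the relation `≤` is `S`-recognizable. -/
def ANS.Comparable {A : Type*} (S : ANS A) : Prop :=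
  S.Recognizable { t : Fin 2 → ℕ | t 0 ≤ t 1 }

/-- An ANS is regular if `ℕ` (i.e. its language) is `S`-recognizable. -/
def ANS.IsRegularANS {A : Type*} (S : ANS A) : Prop :=
  S.Recognizable (Set.univ : Set (Fin 1 → ℕ))

/-- The unary ANS, with language `0*` ordered by length. -/
def unaryANS : ANS Unit where
  rep := fun n => List.replicate n ()
  inj := fun m n h => by simpa using congrArg List.length h

/-- `x` is `S`-automatic: some DFAO outputs `x n` on input `rep_S n`. -/
def SAutomatic {A C : Type*} (S : ANS A) (x : ℕ → C) : Prop :=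
  ∃ (Q : Type) (_ : Fintype Q) (M : DFA A Q) (τ : Q → C),
    ∀ n : ℕ, τ (M.eval (S.rep n)) = x n

/-- The shift map on one-sided infinite words. -/
def shiftMap {C : Type*} (x : ℕ → C) : ℕ → C := fun n => x (n + 1)

/-- The orbit closure of `x` (closure in the product topology over the discrete alphabet):
`y` belongs to it iff every finite prefix of `y` occurs in `x`. -/
def orbitClosure {C : Type*} (x : ℕ → C) : Set (ℕ → C) :=
  { y | ∀ n : ℕ, ∃ m : ℕ, ∀ i < n, y i = x (m + i) }

/-- A subshift: a shift-invariant subset of `C^ℕ` that is closed in the product topology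
over the discrete alphabet (expressed combinatorially). -/
def IsSubshift {C : Type*} (X : Set (ℕ → C)) : Prop :=
  (∀ x ∈ X, shiftMap x ∈ X) ∧
  ∀ y : ℕ → C, (∀ n : ℕ, ∃ x ∈ X, ∀ i < n, y i = x i) → y ∈ X

/-- The language of a set of infinite words: all finite factors of its elements. -/
def LangOf {C : Type*} (X : Set (ℕ → C)) : Set (List C) :=
  { w | ∃ x ∈ X, ∃ p : ℕ, w = List.ofFn fun i : Fin w.length => x (p + i) }

/-- A word is right special in (the language of) `X` if it has two distinct one-letter
extensions in the language of `X`. -/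
def RightSpecial {C : Type*} (X : Set (ℕ → C)) (w : List C) : Prop :=
  ∃ a b : C, a ≠ b ∧ w ++ [a] ∈ LangOf X ∧ w ++ [b] ∈ LangOf X

/-- The factor complexity of `x`: the number of distinct factors of length `n`. -/
noncomputable def factorComplexity {C : Type*} (x : ℕ → C) (n : ℕ) : ℕ :=
  Set.ncard { w : List C | ∃ p : ℕ, w = List.ofFn fun i : Fin n => x (p + i) }

/-- `T` is a strategy tree witnessing `α ∈ W(X)`: a prefix-closed set of finite words
containing the empty word, in which every word of length `i` has exactly `α i + 1`
one-letter extensions, and all whose infinite branches lie in `X`. -/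
def IsStrategyTree {C : Type*} (X : Set (ℕ → C)) (α : ℕ → ℕ) (T : Set (List C)) : Prop :=
  ([] : List C) ∈ T ∧
  (∀ u v : List C, u ++ v ∈ T → u ∈ T) ∧
  (∀ w ∈ T, Set.ncard { c : C | w ++ [c] ∈ T } = α w.length + 1) ∧
  (∀ y : ℕ → C, (∀ n : ℕ, (List.ofFn fun i : Fin n => y i) ∈ T) → y ∈ X)

/-- The winning shift of `X ⊆ C^ℕ`, a subset of `ℕ^ℕ`. -/
def winningShift {C : Type*} (X : Set (ℕ → C)) : Set (ℕ → ℕ) :=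
  { α | ∃ T : Set (List C), IsStrategyTree X α T }

/-- Membership in the winning set of a set `X` of finite words, defined recursively:
`ε ∈ W(X)` iff `ε ∈ X`, and `a :: α ∈ W(X)` iff there is a set of `a + 1` letters `c`
such that `α` is in the winning set of the left quotient of `X` by `c`. -/
def winningSetMem {C : Type*} : List ℕ → Set (List C) → Prop
  | [], X => [] ∈ X
  | a :: α, X => ∃ S : Finset C, S.card = a + 1 ∧ ∀ c ∈ S, winningSetMem α { w | c :: w ∈ X }

/-- `Σ y = m`: the sum of the letters of `y ∈ ℕ^ℕ` is finite and equals `m`. -/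
def sumEq (y : ℕ → ℕ) (m : ℕ) : Prop :=
  (Function.support y).Finite ∧ ∑ᶠ i, y i = m

/-- `Y ⊆ ℕ^ℕ` has finite coding dimension: the sums `Σ y`, `y ∈ Y`, are uniformly bounded. -/
def FiniteCodingDim (Y : Set (ℕ → ℕ)) : Prop :=
  ∃ d : ℕ, ∀ y ∈ Y, ∀ F : Finset ℕ, ∑ i ∈ F, y i ≤ d

/-- The set `{ν(y) : y ∈ Y, Σy = k} ⊆ ℕᵏ`: nondecreasing `k`-tuples `t` such that the word
whose letter at `j` is the number of occurrences of `j` in `t` belongs to `Y`. -/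
def nuSet (Y : Set (ℕ → ℕ)) (k : ℕ) : Set (Fin k → ℕ) :=
  { t | Monotone t ∧ (fun j => Set.ncard { i : Fin k | t i = j }) ∈ Y }

/-- `Y ⊆ ℕ^ℕ` is weakly `S`-codable if `{ν(y) : y ∈ Y, Σy = k}` is `S`-recognizable for
every `k`. -/
def WeaklySCodable {A : Type*} (S : ANS A) (Y : Set (ℕ → ℕ)) : Prop :=
  ∀ k : ℕ, S.Recognizable (nuSet Y k)

/-- `Y ⊆ ℕ^ℕ` is `S`-codable if it is weakly `S`-codable and has finite coding dimension. -/
def SCodable {A : Type*} (S : ANS A) (Y : Set (ℕ → ℕ)) : Prop :=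
  WeaklySCodable S Y ∧ FiniteCodingDim Y

/-- `P_{111}(Y)`: strictly increasing triples `(a, b, c)` such that the word with letter `1`
exactly at positions `a`, `b`, `c` and `0` elsewhere belongs to `Y`. -/
def P111 (Y : Set (ℕ → ℕ)) : Set (Fin 3 → ℕ) :=
  { t | t 0 < t 1 ∧ t 1 < t 2 ∧
        (fun j => if j = t 0 ∨ j = t 1 ∨ j = t 2 then 1 else 0) ∈ Y }

/-- `P_v(Y)` for a finite word `v` over `ℕ`: strictly increasing tuples `n` such that the
word with letter `v i` at position `n i` and `0` elsewhere belongs to `Y`. -/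
def PvSet (v : List ℕ) (Y : Set (ℕ → ℕ)) : Set (Fin v.length → ℕ) :=
  { n | StrictMono n ∧
        (fun j => ∑ i : Fin v.length, if n i = j then v.get i else 0) ∈ Y }

/-- `X` is sofic: the set of label sequences of right-infinite paths in a finite
edge-labeled graph. -/
def IsSofic {C : Type*} (X : Set (ℕ → C)) : Prop :=
  ∃ (V : Type) (_ : Fintype V) (E : Set (V × C × V)),
    X = { x | ∃ p : ℕ → V, ∀ n : ℕ, (p n, x n, p (n + 1)) ∈ E }

/-- The factor `x[a..b-1]` of an infinite word. -/
def segmentOf {C : Type*} (x : ℕ → C) (a b : ℕ) : List C :=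
  List.ofFn fun i : Fin (b - a) => x (a + i)

/-- `U · V^ω`: infinite words that decompose as a word of `U` followed by infinitely many
nonempty words of `V`. -/
def omegaIter {C : Type*} (U V : Set (List C)) : Set (ℕ → C) :=
  { x | ∃ k : ℕ → ℕ, StrictMono k ∧ segmentOf x 0 (k 0) ∈ U ∧
        ∀ i : ℕ, segmentOf x (k i) (k (i + 1)) ∈ V }

/-- `X ⊆ C^ℕ` is ω-regular: a finite union of sets `U · V^ω` with `U`, `V` regular. -/
def IsOmegaRegular {C : Type*} (X : Set (ℕ → C)) : Prop :=
  ∃ (n : ℕ) (U V : Fin n → Set (List C)),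
    (∀ i, IsRegularLang (U i) ∧ IsRegularLang (V i)) ∧
    X = ⋃ i, omegaIter (U i) (V i)

/-- The words `p₁ = a`, `p_{k+1} = p_k bᵏ p_k` (with `a = false`, `b = true`). -/
def pWord : ℕ → List Bool
  | 0 => []
  | 1 => [false]
  | (k + 2) => pWord (k + 1) ++ List.replicate (k + 1) true ++ pWord (k + 1)

/-- Combinatorial continuity of `φ` on `Y` for product topologies over discrete alphabets:
every finite prefix of `φ y` is determined by a finite prefix of `y`. -/
def ContOn {B C : Type*} (φ : (ℕ → B) → (ℕ → C)) (Y : Set (ℕ → B)) : Prop :=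
  ∀ y ∈ Y, ∀ n : ℕ, ∃ m : ℕ, ∀ y' ∈ Y, (∀ i < m, y' i = y i) → ∀ i < n, φ y' i = φ y i

namespace Stmt13

/-! ### Segment lemmas -/

theorem segmentOf_length {C : Type*} (x : ℕ → C) (a b : ℕ) :
    (segmentOf x a b).length = b - a := by
  simp [segmentOf]

theorem segmentOf_getElem {C : Type*} (x : ℕ → C) (a b : ℕ) (i : ℕ)
    (h : i < (segmentOf x a b).length) : (segmentOf x a b)[i] = x (a + i) := by
  simp only [segmentOf] at *
  rw [List.getElem_ofFn]

theorem segmentOf_self {C : Type*} (x : ℕ → C) (a : ℕ) : segmentOf x a a = [] := by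
  have := segmentOf_length x a a
  simpa using List.eq_nil_of_length_eq_zero (by simpa using this)

theorem segmentOf_append {C : Type*} (x : ℕ → C) {a b c : ℕ} (hab : a ≤ b) (hbc : b ≤ c) :
    segmentOf x a c = segmentOf x a b ++ segmentOf x b c := by
  apply List.ext_getElem
  · simp [segmentOf_length]; omega
  · intro i h1 h2
    rw [List.getElem_append]
    by_cases hi : i < (segmentOf x a b).length
    · rw [dif_pos hi, segmentOf_getElem, segmentOf_getElem]
    · rw [dif_neg hi, segmentOf_getElem, segmentOf_getElem]
      congr 1
      simp [segmentOf_length] at hi ⊢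
      omega

theorem segmentOf_snoc {C : Type*} (x : ℕ → C) {a b : ℕ} (hab : a ≤ b) :
    segmentOf x a (b + 1) = segmentOf x a b ++ [x b] := by
  rw [segmentOf_append x hab (Nat.le_succ b)]
  congr 1
  apply List.ext_getElem
  · simp [segmentOf_length]
  · intro i h1 h2
    rw [segmentOf_getElem]
    simp only [segmentOf_length] at h1
    have : i = 0 := by omega
    subst this
    simp

theorem segmentOf_ofFn {C : Type*} (x : ℕ → C) (n : ℕ) :
    (List.ofFn fun i : Fin n => x i) = segmentOf x 0 n := by
  apply List.ext_getElem
  · simp [segmentOf_length]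
  · intro i h1 h2
    rw [segmentOf_getElem]
    simp

/-! ### Pigeonhole and Ramsey -/

theorem exists_infinite_fiber_set {κ : Type*} [Finite κ] {s : Set ℕ} (hs : s.Infinite)
    (f : ℕ → κ) : ∃ k, {n | n ∈ s ∧ f n = k}.Infinite := by
  by_contra h
  push_neg at h
  have hsub : s ⊆ ⋃ k : κ, {n | n ∈ s ∧ f n = k} := by
    intro n hn; exact Set.mem_iUnion.2 ⟨f n, hn, rfl⟩
  exact hs (Set.Finite.subset (Set.finite_iUnion h) hsub)

/-- Infinite Ramsey theorem for pairs, in the form we need. -/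
theorem ramsey_pairs {κ : Type*} [Finite κ] (c : ℕ → ℕ → κ) :
    ∃ g : ℕ → ℕ, StrictMono g ∧ ∃ k0 : κ, ∀ i j, i < j → c (g i) (g j) = k0 := by
  classical
  -- iterated pigeonhole
  have step : ∀ (a : ℕ) (s : Set ℕ), s.Infinite → (∀ b ∈ s, a < b) →
      ∃ (a' : ℕ) (s' : Set ℕ), a' ∈ s ∧ s'.Infinite ∧ (∀ b ∈ s', a' < b) ∧
        (∃ k, ∀ b ∈ s', c a' b = k) ∧ s' ⊆ s := by
    intro a s hs hlt
    obtain ⟨a', ha'⟩ := hs.nonempty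
    obtain ⟨k, hk⟩ := exists_infinite_fiber_set (s := {n | n ∈ s ∧ a' < n})
      (by
        apply Set.Infinite.mono _ (hs.diff (Set.finite_Iic a'))
        intro n hn
        simp only [Set.mem_diff, Set.mem_Iic, not_le] at hn
        exact ⟨hn.1, hn.2⟩) (c a')
    refine ⟨a', {n | (n ∈ s ∧ a' < n) ∧ c a' n = k}, ha', hk.mono (fun b hb => hb),
      fun b hb => hb.1.2, ⟨k, fun b hb => hb.2⟩, fun b hb => hb.1.1⟩
  -- build the sequence
  set Good : Type _ := {p : ℕ × Set ℕ //
    p.2.Infinite ∧ (∀ b ∈ p.2, p.1 < b) ∧ ∃ k, ∀ b ∈ p.2, c p.1 b = k} with hGood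
  have step' : ∀ p : Good, {q : Good // q.1.1 ∈ p.1.2 ∧ q.1.2 ⊆ p.1.2} := by
    intro p
    apply Classical.choice
    obtain ⟨⟨a, s⟩, hs, hlt, _⟩ := p
    obtain ⟨a', s', ha', hs', hlt', hk', hsub'⟩ := step a s hs hlt
    exact ⟨⟨⟨(a', s'), hs', hlt', hk'⟩, ha', hsub'⟩⟩
  have base : Good := by
    apply Classical.choice
    obtain ⟨a', s', _, hs', hlt', hk', _⟩ := step 0 {n | 0 < n}
      (Set.Ioi_infinite 0) (fun b hb => hb)
    exact ⟨⟨(a', s'), hs', hlt', hk'⟩⟩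
  let F : ℕ → Good := fun n => Nat.rec base (fun _ q => (step' q).1) n
  have hF : ∀ n, (F (n+1)).1.1 ∈ (F n).1.2 ∧ (F (n+1)).1.2 ⊆ (F n).1.2 :=
    fun n => (step' (F n)).2
  set a : ℕ → ℕ := fun n => (F n).1.1 with ha
  set S : ℕ → Set ℕ := fun n => (F n).1.2 with hS
  have hmono : StrictMono a := by
    apply strictMono_nat_of_lt_succ
    intro n
    exact (F n).2.2.1 _ (hF n).1
  have hnest : ∀ i j, i ≤ j → S j ⊆ S i := by
    intro i j hij
    induction j, hij using Nat.le_induction with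
    | base => exact fun _ h => h
    | succ j hij ih => exact fun b hb => ih ((hF j).2 hb)
  have hmem : ∀ i j, i < j → a j ∈ S i := by
    intro i j hij
    exact hnest i (j-1) (by omega) (by
      have := (hF (j-1)).1
      have hj : j - 1 + 1 = j := by omega
      rw [hj] at this
      exact this)
  set k : ℕ → κ := fun n => Classical.choose (F n).2.2.2 with hk
  have hkspec : ∀ n, ∀ b ∈ S n, c (a n) b = k n := fun n => Classical.choose_spec (F n).2.2.2
  obtain ⟨k0, hk0⟩ := exists_infinite_fiber_set (s := Set.univ) Set.infinite_univ k
  have hp : {n | k n = k0}.Infinite := hk0.mono (fun n hn => hn.2)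
  refine ⟨fun n => a (Nat.nth (fun n => k n = k0) n),
    hmono.comp (Nat.nth_strictMono hp), k0, ?_⟩
  intro i j hij
  have h1 : Nat.nth (fun n => k n = k0) i < Nat.nth (fun n => k n = k0) j :=
    Nat.nth_strictMono hp hij
  rw [hkspec _ _ (hmem _ _ h1)]
  exact Nat.nth_mem_of_infinite hp i

end Stmt13
namespace Stmt13

/-! ### Selector formulation of strategy trees -/

/-- `y` is a branch of the selector `sel`. -/
def IsBranch {C : Type*} (sel : List C → Finset C) (y : ℕ → C) : Prop :=
  ∀ n : ℕ, y n ∈ sel (List.ofFn fun i : Fin n => y i)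

/-- Winning via a total selector. -/
def SelWin {C : Type*} (X : Set (ℕ → C)) (α : ℕ → ℕ) : Prop :=
  ∃ sel : List C → Finset C,
    (∀ w : List C, (sel w).card = α w.length + 1) ∧
    ∀ y : ℕ → C, IsBranch sel y → y ∈ X

theorem ofFn_take {C : Type*} (y : ℕ → C) (n i : ℕ) (h : i ≤ n) :
    (List.ofFn fun j : Fin n => y j).take i = List.ofFn fun j : Fin i => y j := by
  apply List.ext_getElem
  · simp; omega
  · intro j h1 h2
    simp

theorem ofFn_snoc {C : Type*} (y : ℕ → C) (n : ℕ) :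
    (List.ofFn fun j : Fin (n+1) => y j) = (List.ofFn fun j : Fin n => y j) ++ [y n] := by
  rw [segmentOf_ofFn, segmentOf_ofFn, segmentOf_snoc y (Nat.zero_le n)]

theorem selWin_of_winning {C : Type*} [Fintype C] {X : Set (ℕ → C)} {α : ℕ → ℕ}
    (h : α ∈ winningShift X) : SelWin X α := by
  classical
  obtain ⟨T, hT0, hTpre, hTcard, hTbranch⟩ := h
  -- nodes at every depth
  have hdepth : ∀ d : ℕ, ∃ w ∈ T, w.length = d := by
    intro d
    induction d with
    | zero => exact ⟨[], hT0, rfl⟩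
    | succ d ih =>
      obtain ⟨w, hw, hwl⟩ := ih
      have h1 : {c : C | w ++ [c] ∈ T}.ncard ≠ 0 := by rw [hTcard w hw]; omega
      obtain ⟨c, hc⟩ := Set.nonempty_of_ncard_ne_zero h1
      exact ⟨w ++ [c], hc, by simp [hwl]⟩
  have hbound : ∀ d : ℕ, α d + 1 ≤ Fintype.card C := by
    intro d
    obtain ⟨w, hw, hwl⟩ := hdepth d
    rw [← hwl, ← hTcard w hw]
    have := Set.ncard_le_ncard (Set.subset_univ {c : C | w ++ [c] ∈ T}) Set.finite_univ
    simpa [Set.ncard_univ, Nat.card_eq_fintype_card] using this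
  have hjunk : ∀ d : ℕ, ∃ S : Finset C, S.card = α d + 1 := by
    intro d
    obtain ⟨S, _, hS⟩ := Finset.exists_subset_card_eq
      (s := (Finset.univ : Finset C)) (n := α d + 1) (by rw [Finset.card_univ]; exact hbound d)
    exact ⟨S, hS⟩
  choose junk hjunkc using hjunk
  refine ⟨fun w => if hw : w ∈ T then ((Set.toFinite {c : C | w ++ [c] ∈ T}).toFinset)
    else junk w.length, fun w => ?_, fun y hy => ?_⟩
  · by_cases hw : w ∈ T
    · beta_reduce
      rw [dif_pos hw, ← Set.ncard_eq_toFinset_card, hTcard w hw]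
    · beta_reduce
      rw [dif_neg hw, hjunkc]
  · apply hTbranch
    intro n
    induction n with
    | zero => simpa using hT0
    | succ n ih =>
      have := hy n
      beta_reduce at this
      rw [dif_pos ih, Set.Finite.mem_toFinset] at this
      rw [ofFn_snoc]
      exact this

theorem winning_of_selWin {C : Type*} {X : Set (ℕ → C)} {α : ℕ → ℕ}
    (h : SelWin X α) : α ∈ winningShift X := by
  classical
  obtain ⟨sel, hcard, hwin⟩ := h
  refine ⟨{w : List C | ∀ i : ℕ, ∀ hi : i < w.length, w[i] ∈ sel (w.take i)}, ?_, ?_, ?_, ?_⟩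
  · intro i hi; simp at hi
  · intro u v huv i hi
    have h2 : i < (u ++ v).length := by simp; omega
    have := huv i h2
    rwa [List.getElem_append_left hi, List.take_append_of_le_length (Nat.le_of_lt hi)] at this
  · intro w hw
    have hset : {c : C | w ++ [c] ∈
        {w : List C | ∀ i : ℕ, ∀ hi : i < w.length, w[i] ∈ sel (w.take i)}} = ↑(sel w) := by
      ext c
      simp only [Set.mem_setOf_eq, Finset.coe_sort_coe, Finset.mem_coe]
      constructor
      · intro hc
        have h2 : w.length < (w ++ [c]).length := by simp
        have := hc w.length h2
        simpa using this
      · intro hc i hi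
        simp only [List.length_append, List.length_singleton] at hi
        by_cases hiw : i < w.length
        · rw [List.getElem_append_left hiw, List.take_append_of_le_length (Nat.le_of_lt hiw)]
          exact hw i hiw
        · have hieq : i = w.length := by omega
          subst hieq
          simpa using hc
    rw [hset, Set.ncard_coe_finset, hcard]
  · intro y hy
    apply hwin
    intro n
    have h2 : n < (List.ofFn fun i : Fin (n+1) => y i).length := by simp
    have := hy (n+1) n h2
    rw [ofFn_take y (n+1) n (Nat.le_succ n), List.getElem_ofFn] at this
    exact this

theorem selWin_iff {C : Type*} [Fintype C] {X : Set (ℕ → C)} {α : ℕ → ℕ} :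
    α ∈ winningShift X ↔ SelWin X α :=
  ⟨selWin_of_winning, winning_of_selWin⟩

end Stmt13
namespace Stmt13

section Automaton

variable {C : Type} {nn : ℕ} {Qu Qv : Fin nn → Type}

/-- Combined state space of the flag automaton. -/
abbrev PSt (Qu Qv : Fin nn → Type) : Type := (i : Fin nn) × (Qu i ⊕ Qv i)

variable (dfU : ∀ i, DFA C (Qu i)) (dfV : ∀ i, DFA C (Qv i))

/-- Flagged step relation of the combined automaton. -/
def Tstep (b : Bool) : PSt Qu Qv → C → PSt Qu Qv → Prop
  | ⟨i, .inl s⟩, c, q =>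
      if b then ((dfU i).step s c ∈ (dfU i).accept ∧ q = ⟨i, .inr (dfV i).start⟩)
      else q = ⟨i, .inl ((dfU i).step s c)⟩
  | ⟨i, .inr s⟩, c, q =>
      if b then ((dfV i).step s c ∈ (dfV i).accept ∧ q = ⟨i, .inr (dfV i).start⟩)
      else q = ⟨i, .inr ((dfV i).step s c)⟩

/-- Initial states. -/
def InitSt : Set (PSt Qu Qv) :=
  {p | (∃ i, p = ⟨i, .inl (dfU i).start⟩) ∨
       (∃ i, p = ⟨i, .inr (dfV i).start⟩ ∧ [] ∈ (dfU i).accepts)}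

/-- Accepting-run predicate. -/
def AccRun (x : ℕ → C) : Prop :=
  ∃ r : ℕ → PSt Qu Qv, r 0 ∈ InitSt dfU dfV ∧
    (∀ n, ∃ b, Tstep dfU dfV b (r n) (x n) (r (n+1))) ∧
    (∀ N, ∃ n, N ≤ n ∧ Tstep dfU dfV true (r n) (x n) (r (n+1)))

theorem Tstep_fst {b : Bool} {p q : PSt Qu Qv} {c : C}
    (h : Tstep dfU dfV b p c q) : q.1 = p.1 := by
  rcases p with ⟨i, s | s⟩ <;> rcases b <;> simp [Tstep] at h
  · rw [h]
  · rw [h.2]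
  · rw [h]
  · rw [h.2]

theorem Tstep_true_target {p q : PSt Qu Qv} {c : C}
    (h : Tstep dfU dfV true p c q) : q = ⟨p.1, .inr (dfV p.1).start⟩ := by
  rcases p with ⟨i, s | s⟩ <;> simp [Tstep] at h
  · exact h.2
  · exact h.2

/-- Direction B: a word in the union is accepted by a run. -/
theorem accRun_of_mem {x : ℕ → C} {i : Fin nn} {k : ℕ → ℕ} (hk : StrictMono k)
    (hU : segmentOf x 0 (k 0) ∈ (dfU i).accepts)
    (hV : ∀ j, segmentOf x (k j) (k (j+1)) ∈ (dfV i).accepts) :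
    AccRun dfU dfV x := by
  classical
  set J : ℕ → ℕ := fun n => Nat.findGreatest (fun j => k j ≤ n) n with hJ
  have hJ1 : ∀ n, k 0 ≤ n → k (J n) ≤ n := by
    intro n hn
    exact Nat.findGreatest_spec (P := fun j => k j ≤ n) (Nat.zero_le n) hn
  have hJ2 : ∀ n, n < k (J n + 1) := by
    intro n
    by_contra hcon
    push_neg at hcon
    exact Nat.findGreatest_is_greatest (P := fun j => k j ≤ n)
      (Nat.lt_succ_self _) (le_trans hk.le_apply hcon) hcon
  have hJval : ∀ n j, k j ≤ n → n < k (j+1) → J n = j := by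
    intro n j h1 h2
    have hle : j ≤ J n := Nat.le_findGreatest (P := fun j => k j ≤ n)
      (le_trans hk.le_apply h1) h1
    have : J n < j + 1 := by
      by_contra hcon
      push_neg at hcon
      have : k (j+1) ≤ k (J n) := hk.monotone hcon
      have h3 : k 0 ≤ n := le_trans (hk.monotone (Nat.zero_le j)) h1
      have := hJ1 n h3
      omega
    omega
  set r : ℕ → PSt Qu Qv := fun n =>
    if n < k 0 then ⟨i, .inl ((dfU i).evalFrom (dfU i).start (segmentOf x 0 n))⟩
    else ⟨i, .inr ((dfV i).evalFrom (dfV i).start (segmentOf x (k (J n)) n))⟩ with hr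
  have hrU : ∀ n, n < k 0 → r n = ⟨i, .inl ((dfU i).evalFrom (dfU i).start (segmentOf x 0 n))⟩ := by
    intro n hn; simp only [hr, if_pos hn]
  have hrV : ∀ n, k 0 ≤ n → r n = ⟨i, .inr ((dfV i).evalFrom (dfV i).start (segmentOf x (k (J n)) n))⟩ := by
    intro n hn; simp only [hr, if_neg (not_lt.2 hn)]
  -- the step analysis
  have hstep : ∀ n, (n + 1 = k 0 ∨ (k 0 ≤ n ∧ n + 1 = k (J n + 1))) →
      Tstep dfU dfV true (r n) (x n) (r (n+1)) := by
    intro n hn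
    rcases hn with hn | ⟨hn0, hn⟩
    · -- U-flag
      rw [hrU n (by omega), hrV (n+1) (by omega)]
      have hJn : J (n+1) = 0 := hJval (n+1) 0 (by omega)
        (by have : k 0 < k (0+1) := hk (by omega); omega)
      simp only [Tstep, if_pos rfl, hJn]
      constructor
      · rw [← DFA.evalFrom_append_singleton, ← segmentOf_snoc x (Nat.zero_le n), hn]
        rw [DFA.mem_accepts] at hU
        exact hU
      · rw [← hn]
        rw [segmentOf_self]
        simp [DFA.evalFrom_nil]
    · -- V-flag
      rw [hrV n hn0, hrV (n+1) (by omega)]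
      have hJn1 : J (n+1) = J n + 1 := hJval (n+1) (J n + 1) (by omega)
        (by have : k (J n + 1) < k (J n + 1 + 1) := hk (by omega); omega)
      simp only [Tstep, if_pos rfl, hJn1]
      constructor
      · rw [← DFA.evalFrom_append_singleton, ← segmentOf_snoc x (hJ1 n hn0), hn]
        have := hV (J n)
        rw [DFA.mem_accepts] at this
        exact this
      · rw [← hn, segmentOf_self]
        simp [DFA.evalFrom_nil]
  have hplain : ∀ n, ¬(n + 1 = k 0 ∨ (k 0 ≤ n ∧ n + 1 = k (J n + 1))) →
      Tstep dfU dfV false (r n) (x n) (r (n+1)) := by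
    intro n hn
    push_neg at hn
    by_cases hc : n + 1 < k 0
    · rw [hrU n (by omega), hrU (n+1) hc]
      simp only [Tstep, if_neg (Bool.false_ne_true)]
      rw [← DFA.evalFrom_append_singleton, ← segmentOf_snoc x (Nat.zero_le n)]
    · -- n+1 > k 0 (since ≠) hence n ≥ k 0
      have hn0 : k 0 ≤ n := by omega
      have hJn1 : J (n+1) = J n := hJval (n+1) (J n)
        (by have := hJ1 n hn0; omega)
        (by have := hJ2 n; have := hn.2 hn0; omega)
      rw [hrV n hn0, hrV (n+1) (by omega), hJn1]
      simp only [Tstep, if_neg (Bool.false_ne_true)]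
      rw [← DFA.evalFrom_append_singleton, ← segmentOf_snoc x (hJ1 n hn0)]
  refine ⟨r, ?_, ?_, ?_⟩
  · by_cases h0 : 0 < k 0
    · rw [hrU 0 h0]
      left
      exact ⟨i, by rw [segmentOf_self]; simp [DFA.evalFrom_nil]⟩
    · have hk0 : k 0 = 0 := by omega
      rw [hrV 0 (by omega)]
      right
      refine ⟨i, ?_, ?_⟩
      · have hJ0 : J 0 = 0 := hJval 0 0 (by omega)
          (by have : k 0 < k (0+1) := hk (by omega); omega)
        rw [hJ0, hk0, segmentOf_self]
        simp [DFA.evalFrom_nil]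
      · rw [hk0, segmentOf_self] at hU
        exact hU
  · intro n
    by_cases hc : n + 1 = k 0 ∨ (k 0 ≤ n ∧ n + 1 = k (J n + 1))
    · exact ⟨true, hstep n hc⟩
    · exact ⟨false, hplain n hc⟩
  · intro N
    refine ⟨k (N+1) - 1, ?_, ?_⟩
    · have h5 : N + 1 ≤ k (N+1) := hk.le_apply
      omega
    · have hpos : 0 < k (N + 1) := by
        have h1 : k N < k (N+1) := hk (by omega)
        omega
      have heq : k (N+1) - 1 + 1 = k (N+1) := by omega
      apply hstep
      by_cases hc : k 0 = k (N + 1)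
      · left; rw [heq, hc]
      · right
        have h0 : k 0 < k (N+1) := by
          have h6 : k 0 ≤ k (N+1) := hk.monotone (Nat.zero_le (N+1))
          omega
        have hn0 : k 0 ≤ k (N+1) - 1 := by omega
        refine ⟨hn0, ?_⟩
        have hJn : J (k (N+1) - 1) = N := by
          apply hJval
          · -- k N ≤ k (N+1) - 1
            have h7 : k N < k (N+1) := hk (by omega)
            omega
          · omega
        rw [hJn, heq]

end Automaton

end Stmt13
namespace Stmt13

section Automaton2

variable {C : Type} {nn : ℕ} {Qu Qv : Fin nn → Type}
variable {dfU : ∀ i, DFA C (Qu i)} {dfV : ∀ i, DFA C (Qv i)}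

theorem tstep_inl_false {i : Fin nn} {s : Qu i} {c : C} {q : PSt Qu Qv}
    (h : Tstep dfU dfV false ⟨i, .inl s⟩ c q) : q = ⟨i, .inl ((dfU i).step s c)⟩ := by
  simpa [Tstep] using h

theorem tstep_inr_false {i : Fin nn} {s : Qv i} {c : C} {q : PSt Qu Qv}
    (h : Tstep dfU dfV false ⟨i, .inr s⟩ c q) : q = ⟨i, .inr ((dfV i).step s c)⟩ := by
  simpa [Tstep] using h

theorem tstep_inl_true {i : Fin nn} {s : Qu i} {c : C} {q : PSt Qu Qv}
    (h : Tstep dfU dfV true ⟨i, .inl s⟩ c q) :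
    (dfU i).step s c ∈ (dfU i).accept ∧ q = ⟨i, .inr (dfV i).start⟩ := by
  simpa [Tstep] using h

theorem tstep_inr_true {i : Fin nn} {s : Qv i} {c : C} {q : PSt Qu Qv}
    (h : Tstep dfU dfV true ⟨i, .inr s⟩ c q) :
    (dfV i).step s c ∈ (dfV i).accept ∧ q = ⟨i, .inr (dfV i).start⟩ := by
  simpa [Tstep] using h

theorem mem_of_accRun {x : ℕ → C} (h : AccRun dfU dfV x) :
    ∃ i, x ∈ omegaIter ((dfU i).accepts : Set (List C)) ((dfV i).accepts : Set (List C)) := by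
  classical
  obtain ⟨r, hinit, hrun, hflag⟩ := h
  set p : ℕ → Prop := fun n => Tstep dfU dfV true (r n) (x n) (r (n+1)) with hp
  have hpinf : (setOf p).Infinite := by
    rw [Set.infinite_coe_iff.symm]
    rw [Set.infinite_coe_iff]
    intro hfin
    obtain ⟨B, hB⟩ := hfin.bddAbove
    obtain ⟨n, hn, hn2⟩ := hflag (B+1)
    have := hB hn2
    omega
  set f : ℕ → ℕ := fun j => Nat.nth p j with hf
  have hfmono : StrictMono f := Nat.nth_strictMono hpinf
  have hfp : ∀ j, p (f j) := fun j => Nat.nth_mem_of_infinite hpinf j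
  have hgap : ∀ j n, f j < n → n < f (j+1) → ¬ p n := by
    intro j n h1 h2 hpn
    have hcount := Nat.nth_count (p := p) hpn
    have hmono := hfmono
    have hx1 : f j < Nat.nth p (Nat.count p n) := by rw [hcount]; exact h1
    have hx2 : Nat.nth p (Nat.count p n) < f (j+1) := by rw [hcount]; exact h2
    have l1 : j < Nat.count p n := by
      by_contra hcc
      push_neg at hcc
      exact absurd (hfmono.monotone hcc) (by simp only [hf] at hx1 ⊢; omega)
    have l2 : Nat.count p n < j + 1 := by
      by_contra hcc
      push_neg at hcc
      exact absurd (hfmono.monotone hcc) (by simp only [hf] at hx2 ⊢; omega)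
    omega
  have hgap0 : ∀ n, n < f 0 → ¬ p n := by
    intro n h1 hpn
    have hcount := Nat.nth_count (p := p) hpn
    have : f 0 ≤ Nat.nth p (Nat.count p n) := hfmono.monotone (Nat.zero_le _)
    omega
  -- the component
  set i : Fin nn := (r 0).1 with hi
  have hcomp : ∀ n, (r n).1 = i := by
    intro n
    induction n with
    | zero => rfl
    | succ n ih =>
      obtain ⟨b, hb⟩ := hrun n
      rw [Tstep_fst dfU dfV hb, ih]
  -- not-flagged steps are plain
  have hplainstep : ∀ n, ¬ p n → Tstep dfU dfV false (r n) (x n) (r (n+1)) := by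
    intro n hn
    obtain ⟨b, hb⟩ := hrun n
    cases b with
    | true => exact absurd hb hn
    | false => exact hb
  -- V tracking after each flag
  have htrack : ∀ j n, f j + 1 ≤ n → n ≤ f (j+1) →
      r n = ⟨i, .inr ((dfV i).evalFrom (dfV i).start (segmentOf x (f j + 1) n))⟩ := by
    intro j n h1 h2
    induction n, h1 using Nat.le_induction with
    | base =>
      have := Tstep_true_target dfU dfV (hfp j)
      rw [segmentOf_self]
      simp only [DFA.evalFrom_nil]
      rw [this, hcomp (f j)]
    | succ n h1 ih =>
      have hn2 : n ≤ f (j+1) := by omega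
      have hlt : n < f (j+1) := by omega
      have hnp : ¬ p n := hgap j n (by omega) hlt
      have hr := ih hn2
      have hstep := hplainstep n hnp
      rw [hr] at hstep
      rw [tstep_inr_false hstep, segmentOf_snoc x (by omega : f j + 1 ≤ n),
        DFA.evalFrom_append_singleton]
  -- blocks are accepted
  have hblocks : ∀ j, segmentOf x (f j + 1) (f (j+1) + 1) ∈ (dfV i).accepts := by
    intro j
    have hr := htrack j (f (j+1)) (by have : f j < f (j+1) := hfmono (by omega); omega) le_rfl
    have hstep := hfp (j+1)
    rw [hp] at hstep
    rw [hr] at hstep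
    have := (tstep_inr_true hstep).1
    rw [DFA.mem_accepts]
    show (dfV i).evalFrom (dfV i).start _ ∈ _
    rw [segmentOf_snoc x (by have : f j < f (j+1) := hfmono (by omega); omega),
      DFA.evalFrom_append_singleton]
    exact this
  -- initial case split
  rcases hinit with ⟨i2, hinit⟩ | ⟨i2, hinit, hUeps⟩
  · -- starts in U
    have hii : i = i2 := by rw [hi, hinit]
    subst hii
    have htrackU : ∀ n, n ≤ f 0 →
        r n = ⟨i, .inl ((dfU i).evalFrom (dfU i).start (segmentOf x 0 n))⟩ := by
      intro n hn
      induction n with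
      | zero => rw [segmentOf_self]; simp only [DFA.evalFrom_nil]; exact hinit
      | succ n ih =>
        have hnp : ¬ p n := hgap0 n (by omega)
        have hr := ih (by omega)
        have hstep := hplainstep n hnp
        rw [hr] at hstep
        rw [tstep_inl_false hstep, segmentOf_snoc x (Nat.zero_le n),
          DFA.evalFrom_append_singleton]
    have hUmem : segmentOf x 0 (f 0 + 1) ∈ (dfU i).accepts := by
      have hr := htrackU (f 0) le_rfl
      have hstep := hfp 0
      rw [hp] at hstep
      rw [hr] at hstep
      have := (tstep_inl_true hstep).1
      rw [DFA.mem_accepts]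
      show (dfU i).evalFrom (dfU i).start _ ∈ _
      rw [segmentOf_snoc x (Nat.zero_le (f 0)), DFA.evalFrom_append_singleton]
      exact this
    refine ⟨i, fun j => f j + 1, ?_, hUmem, ?_⟩
    · intro a b hab
      have h9 : f a < f b := hfmono hab
      show f a + 1 < f b + 1
      omega
    · intro j
      exact hblocks j
  · -- starts in V (empty U part)
    have hii : i = i2 := by rw [hi, hinit]
    subst hii
    have htrackV0 : ∀ n, n ≤ f 0 →
        r n = ⟨i, .inr ((dfV i).evalFrom (dfV i).start (segmentOf x 0 n))⟩ := by
      intro n hn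
      induction n with
      | zero => rw [segmentOf_self]; simp only [DFA.evalFrom_nil]; exact hinit
      | succ n ih =>
        have hnp : ¬ p n := hgap0 n (by omega)
        have hr := ih (by omega)
        have hstep := hplainstep n hnp
        rw [hr] at hstep
        rw [tstep_inr_false hstep, segmentOf_snoc x (Nat.zero_le n),
          DFA.evalFrom_append_singleton]
    have hV0 : segmentOf x 0 (f 0 + 1) ∈ (dfV i).accepts := by
      have hr := htrackV0 (f 0) le_rfl
      have hstep := hfp 0
      rw [hp] at hstep
      rw [hr] at hstep
      have := (tstep_inr_true hstep).1
      rw [DFA.mem_accepts]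
      show (dfV i).evalFrom (dfV i).start _ ∈ _
      rw [segmentOf_snoc x (Nat.zero_le (f 0)), DFA.evalFrom_append_singleton]
      exact this
    refine ⟨i, fun j => Nat.rec 0 (fun j' _ => f j' + 1) j, ?_, ?_, ?_⟩
    · apply strictMono_nat_of_lt_succ
      intro j
      cases j with
      | zero => simp
      | succ j =>
        have h8 : f j < f (j+1) := hfmono (by omega)
        simpa using h8
    · show segmentOf x 0 0 ∈ _
      rw [segmentOf_self]
      exact hUeps
    · intro j
      cases j with
      | zero => exact hV0
      | succ j => exact hblocks j

end Automaton2

end Stmt13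
namespace Stmt13

section MonW

variable {C : Type} {nn : ℕ} {Qu Qv : Fin nn → Type}
variable (dfU : ∀ i, DFA C (Qu i)) (dfV : ∀ i, DFA C (Qv i))

/-- Relation composition. -/
def rcomp (A B : Set (PSt Qu Qv × PSt Qu Qv)) : Set (PSt Qu Qv × PSt Qu Qv) :=
  {pq | ∃ z, (pq.1, z) ∈ A ∧ (z, pq.2) ∈ B}

/-- The monoid of flagged transition relations. -/
abbrev Mw (Qu Qv : Fin nn → Type) : Type :=
  Set (PSt Qu Qv × PSt Qu Qv) × Set (PSt Qu Qv × PSt Qu Qv)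

def mwMul (u v : Mw Qu Qv) : Mw Qu Qv :=
  (rcomp u.1 v.1, rcomp u.1 v.2 ∪ rcomp u.2 v.1)

def mwOne : Mw Qu Qv := ({pq | pq.1 = pq.2}, ∅)

theorem rcomp_assoc (A B D : Set (PSt Qu Qv × PSt Qu Qv)) :
    rcomp (rcomp A B) D = rcomp A (rcomp B D) := by
  ext ⟨p, q⟩
  constructor
  · rintro ⟨z, ⟨w, h1, h2⟩, h3⟩
    exact ⟨w, h1, z, h2, h3⟩
  · rintro ⟨w, h1, z, h2, h3⟩
    exact ⟨z, ⟨w, h1, h2⟩, h3⟩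

theorem rcomp_one_left (A : Set (PSt Qu Qv × PSt Qu Qv)) :
    rcomp {pq | pq.1 = pq.2} A = A := by
  ext ⟨p, q⟩
  constructor
  · rintro ⟨z, h1, h2⟩
    simp only [Set.mem_setOf_eq] at h1
    rwa [h1]
  · intro h
    exact ⟨p, rfl, h⟩

theorem rcomp_one_right (A : Set (PSt Qu Qv × PSt Qu Qv)) :
    rcomp A {pq | pq.1 = pq.2} = A := by
  ext ⟨p, q⟩
  constructor
  · rintro ⟨z, h1, h2⟩
    simp only [Set.mem_setOf_eq] at h2
    rwa [← h2]
  · intro h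
    exact ⟨q, h, rfl⟩

theorem rcomp_empty_left (A : Set (PSt Qu Qv × PSt Qu Qv)) : rcomp ∅ A = ∅ := by
  ext ⟨p, q⟩
  simp [rcomp]

theorem rcomp_empty_right (A : Set (PSt Qu Qv × PSt Qu Qv)) : rcomp A ∅ = ∅ := by
  ext ⟨p, q⟩
  simp [rcomp]

theorem rcomp_union_left (A B D : Set (PSt Qu Qv × PSt Qu Qv)) :
    rcomp (A ∪ B) D = rcomp A D ∪ rcomp B D := by
  ext ⟨p, q⟩
  constructor
  · rintro ⟨z, (h1 | h1), h2⟩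
    · exact Or.inl ⟨z, h1, h2⟩
    · exact Or.inr ⟨z, h1, h2⟩
  · rintro (⟨z, h1, h2⟩ | ⟨z, h1, h2⟩)
    · exact ⟨z, Or.inl h1, h2⟩
    · exact ⟨z, Or.inr h1, h2⟩

theorem rcomp_union_right (A B D : Set (PSt Qu Qv × PSt Qu Qv)) :
    rcomp A (B ∪ D) = rcomp A B ∪ rcomp A D := by
  ext ⟨p, q⟩
  constructor
  · rintro ⟨z, h1, (h2 | h2)⟩
    · exact Or.inl ⟨z, h1, h2⟩
    · exact Or.inr ⟨z, h1, h2⟩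
  · rintro (⟨z, h1, h2⟩ | ⟨z, h1, h2⟩)
    · exact ⟨z, h1, Or.inl h2⟩
    · exact ⟨z, h1, Or.inr h2⟩

theorem mwMul_assoc (u v w : Mw Qu Qv) : mwMul (mwMul u v) w = mwMul u (mwMul v w) := by
  unfold mwMul
  refine Prod.ext ?_ ?_
  · exact rcomp_assoc u.1 v.1 w.1
  · show rcomp (rcomp u.1 v.1) w.2 ∪ rcomp (rcomp u.1 v.2 ∪ rcomp u.2 v.1) w.1 =
      rcomp u.1 (rcomp v.1 w.2 ∪ rcomp v.2 w.1) ∪ rcomp u.2 (rcomp v.1 w.1)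
    rw [rcomp_union_left, rcomp_union_right, rcomp_assoc, rcomp_assoc, rcomp_assoc]
    ext pq
    simp only [Set.mem_union]
    tauto

theorem mwMul_one_left (u : Mw Qu Qv) : mwMul mwOne u = u := by
  unfold mwMul mwOne
  refine Prod.ext ?_ ?_
  · exact rcomp_one_left u.1
  · show rcomp {pq | pq.1 = pq.2} u.2 ∪ rcomp ∅ u.1 = u.2
    rw [rcomp_one_left, rcomp_empty_left, Set.union_empty]

theorem mwMul_one_right (u : Mw Qu Qv) : mwMul u mwOne = u := by
  unfold mwMul mwOne
  refine Prod.ext ?_ ?_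
  · exact rcomp_one_right u.1
  · show rcomp u.1 ∅ ∪ rcomp u.2 {pq | pq.1 = pq.2} = u.2
    rw [rcomp_one_right, rcomp_empty_right, Set.empty_union]

/-- The value of a single letter. -/
def mwOf (c : C) : Mw Qu Qv :=
  ({pq | ∃ bo, Tstep dfU dfV bo pq.1 c pq.2}, {pq | Tstep dfU dfV true pq.1 c pq.2})

/-- The monoid value of a finite word. -/
def hval (w : List C) : Mw Qu Qv :=
  w.foldr (fun c acc => mwMul (mwOf dfU dfV c) acc) mwOne

theorem hval_nil : hval dfU dfV ([] : List C) = mwOne := rfl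

theorem hval_cons (c : C) (w : List C) :
    hval dfU dfV (c :: w) = mwMul (mwOf dfU dfV c) (hval dfU dfV w) := rfl

theorem hval_append (w₁ w₂ : List C) :
    hval dfU dfV (w₁ ++ w₂) = mwMul (hval dfU dfV w₁) (hval dfU dfV w₂) := by
  induction w₁ with
  | nil => rw [List.nil_append, hval_nil, mwMul_one_left]
  | cons c w ih =>
    rw [List.cons_append, hval_cons, hval_cons, ih, mwMul_assoc]

theorem hval_singleton (c : C) : hval dfU dfV [c] = mwOf dfU dfV c := by
  rw [hval_cons, hval_nil, mwMul_one_right]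

/-- Reachability along an infinite word from position `a` to `b`. -/
def Reach (x : ℕ → C) (a b : ℕ) (p q : PSt Qu Qv) : Prop :=
  ∃ g : ℕ → PSt Qu Qv, g a = p ∧ g b = q ∧
    ∀ k, a ≤ k → k < b → ∃ bo, Tstep dfU dfV bo (g k) (x k) (g (k+1))

/-- Flagged reachability. -/
def ReachF (x : ℕ → C) (a b : ℕ) (p q : PSt Qu Qv) : Prop :=
  ∃ g : ℕ → PSt Qu Qv, g a = p ∧ g b = q ∧
    (∀ k, a ≤ k → k < b → ∃ bo, Tstep dfU dfV bo (g k) (x k) (g (k+1))) ∧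
    ∃ k, a ≤ k ∧ k < b ∧ Tstep dfU dfV true (g k) (x k) (g (k+1))

theorem reach_snoc {x : ℕ → C} {a b : ℕ} (hab : a ≤ b) {p q : PSt Qu Qv} :
    Reach dfU dfV x a (b+1) p q ↔
      ∃ z, Reach dfU dfV x a b p z ∧ ∃ bo, Tstep dfU dfV bo z (x b) q := by
  constructor
  · rintro ⟨g, hga, hgb, hgs⟩
    exact ⟨g b, ⟨g, hga, rfl, fun k h1 h2 => hgs k h1 (by omega)⟩,
      by rw [← hgb]; exact hgs b hab (by omega)⟩
  · rintro ⟨z, ⟨g, hga, hgb, hgs⟩, bo, hstep⟩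
    refine ⟨fun k => if k ≤ b then g k else q, by simp [hab, hga], by simp, ?_⟩
    intro k h1 h2
    by_cases hk : k < b
    · simp only [if_pos (by omega : k ≤ b), if_pos (by omega : k + 1 ≤ b)]
      exact hgs k h1 hk
    · have hkb : k = b := by omega
      subst hkb
      simp only [if_pos le_rfl, if_neg (by omega : ¬ k + 1 ≤ k), hgb]
      exact ⟨bo, hstep⟩

theorem reachF_snoc {x : ℕ → C} {a b : ℕ} (hab : a ≤ b) {p q : PSt Qu Qv} :
    ReachF dfU dfV x a (b+1) p q ↔
      (∃ z, ReachF dfU dfV x a b p z ∧ ∃ bo, Tstep dfU dfV bo z (x b) q) ∨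
      (∃ z, Reach dfU dfV x a b p z ∧ Tstep dfU dfV true z (x b) q) := by
  constructor
  · rintro ⟨g, hga, hgb, hgs, kf, hk1, hk2, hk3⟩
    by_cases hkf : kf < b
    · left
      exact ⟨g b, ⟨g, hga, rfl, fun k h1 h2 => hgs k h1 (by omega), kf, hk1, hkf, hk3⟩,
        by rw [← hgb]; exact hgs b hab (by omega)⟩
    · right
      have hkb : kf = b := by omega
      subst hkb
      rw [← hgb]
      exact ⟨g kf, ⟨g, hga, rfl, fun k h1 h2 => hgs k h1 (by omega)⟩, hk3⟩
  · rintro (⟨z, ⟨g, hga, hgb, hgs, kf, hk1, hk2, hk3⟩, bo, hstep⟩ | ⟨z, ⟨g, hga, hgb, hgs⟩, hstep⟩)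
    · refine ⟨fun k => if k ≤ b then g k else q, by simp [hab, hga], by simp, ?_, ?_⟩
      · intro k h1 h2
        by_cases hk : k < b
        · simp only [if_pos (by omega : k ≤ b), if_pos (by omega : k + 1 ≤ b)]
          exact hgs k h1 hk
        · have hkb : k = b := by omega
          subst hkb
          simp only [if_pos le_rfl, if_neg (by omega : ¬ k + 1 ≤ k), hgb]
          exact ⟨bo, hstep⟩
      · refine ⟨kf, hk1, by omega, ?_⟩
        simp only [if_pos (by omega : kf ≤ b), if_pos (by omega : kf + 1 ≤ b)]
        exact hk3
    · refine ⟨fun k => if k ≤ b then g k else q, by simp [hab, hga], by simp, ?_, ?_⟩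
      · intro k h1 h2
        by_cases hk : k < b
        · simp only [if_pos (by omega : k ≤ b), if_pos (by omega : k + 1 ≤ b)]
          exact hgs k h1 hk
        · have hkb : k = b := by omega
          subst hkb
          simp only [if_pos le_rfl, if_neg (by omega : ¬ k + 1 ≤ k), hgb]
          exact ⟨true, hstep⟩
      · refine ⟨b, hab, by omega, ?_⟩
        simp only [if_pos le_rfl, if_neg (by omega : ¬ b + 1 ≤ b), hgb]
        exact hstep

/-- The bridge between `hval` of a segment and reachability. -/
theorem hval_reach {x : ℕ → C} {a : ℕ} : ∀ {b : ℕ}, a ≤ b → ∀ p q : PSt Qu Qv,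
    ((p, q) ∈ (hval dfU dfV (segmentOf x a b)).1 ↔ Reach dfU dfV x a b p q) ∧
    ((p, q) ∈ (hval dfU dfV (segmentOf x a b)).2 ↔ ReachF dfU dfV x a b p q) := by
  intro b hab
  induction b, hab using Nat.le_induction with
  | base =>
    intro p q
    rw [segmentOf_self, hval_nil]
    constructor
    · show p = q ↔ _
      constructor
      · rintro rfl
        exact ⟨fun _ => p, rfl, rfl, fun k h1 h2 => by omega⟩
      · rintro ⟨g, hga, hgb, _⟩
        rw [← hga, ← hgb]
    · show (p, q) ∈ (∅ : Set _) ↔ _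
      simp only [Set.mem_empty_iff_false, false_iff]
      rintro ⟨g, _, _, _, k, h1, h2, _⟩
      omega
  | succ b hab ih =>
    intro p q
    rw [segmentOf_snoc x hab, hval_append, hval_singleton]
    constructor
    · show (p, q) ∈ rcomp _ _ ↔ _
      rw [reach_snoc dfU dfV hab]
      constructor
      · rintro ⟨z, h1, h2⟩
        exact ⟨z, ((ih p z).1).1 h1, h2⟩
      · rintro ⟨z, h1, h2⟩
        exact ⟨z, ((ih p z).1).2 h1, h2⟩
    · show (p, q) ∈ rcomp _ _ ∪ rcomp _ _ ↔ _
      rw [reachF_snoc dfU dfV hab]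
      constructor
      · rintro (⟨z, h1, h2⟩ | ⟨z, h1, h2⟩)
        · exact Or.inr ⟨z, ((ih p z).1).1 h1, h2⟩
        · exact Or.inl ⟨z, ((ih p z).2).1 h1, h2⟩
      · rintro (⟨z, h1, h2⟩ | ⟨z, h1, h2⟩)
        · exact Or.inr ⟨z, ((ih p z).2).2 h1, h2⟩
        · exact Or.inl ⟨z, ((ih p z).1).2 h1, h2⟩

end MonW

end Stmt13
namespace Stmt13

theorem findGreatest_cut {k : ℕ → ℕ} (hk : StrictMono k) {n j : ℕ}
    [DecidablePred (fun j => k j ≤ n)] (h1 : k j ≤ n) (h2 : n < k (j+1)) :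
    Nat.findGreatest (fun j => k j ≤ n) n = j := by
  have hle : j ≤ Nat.findGreatest (fun j => k j ≤ n) n :=
    Nat.le_findGreatest (le_trans hk.le_apply h1) h1
  have hup : Nat.findGreatest (fun j => k j ≤ n) n < j + 1 := by
    by_contra hcon
    push_neg at hcon
    have hP : k (Nat.findGreatest (fun j => k j ≤ n) n) ≤ n :=
      Nat.findGreatest_spec (P := fun j => k j ≤ n) (le_trans hk.le_apply h1) h1
    have : k (j+1) ≤ k (Nat.findGreatest (fun j => k j ≤ n) n) := hk.monotone hcon
    omega
  omega

theorem exists_block {l : ℕ → ℕ} (hl : StrictMono l) {n : ℕ} (hn : l 0 ≤ n) :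
    ∃ j, l j ≤ n ∧ n < l (j+1) := by
  classical
  refine ⟨Nat.findGreatest (fun j => l j ≤ n) n, ?_, ?_⟩
  · exact Nat.findGreatest_spec (P := fun j => l j ≤ n) (Nat.zero_le n) hn
  · by_contra hcon
    push_neg at hcon
    exact Nat.findGreatest_is_greatest (P := fun j => l j ≤ n)
      (Nat.lt_succ_self _) (le_trans hl.le_apply hcon) hcon

section TX

variable {C : Type} {nn : ℕ} {Qu Qv : Fin nn → Type}
variable {dfU : ∀ i, DFA C (Qu i)} {dfV : ∀ i, DFA C (Qv i)}

/-- **Transfer lemma**: two words with blockwise equal `hval`s are equi-accepted. -/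
theorem transfer_accRun {x y : ℕ → C} {l l' : ℕ → ℕ}
    (hl : StrictMono l) (hl' : StrictMono l')
    (h0 : hval dfU dfV (segmentOf x 0 (l 0)) = hval dfU dfV (segmentOf y 0 (l' 0)))
    (hb : ∀ j, hval dfU dfV (segmentOf x (l j) (l (j+1))) =
      hval dfU dfV (segmentOf y (l' j) (l' (j+1))))
    (hx : AccRun dfU dfV x) : AccRun dfU dfV y := by
  classical
  obtain ⟨r, hinit, hrun, hflag⟩ := hx
  -- x-side reachability facts
  have hux : (r 0, r (l 0)) ∈ (hval dfU dfV (segmentOf x 0 (l 0))).1 :=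
    ((hval_reach dfU dfV (Nat.zero_le (l 0)) (r 0) (r (l 0))).1).2
      ⟨r, rfl, rfl, fun k _ _ => hrun k⟩
  have hbx : ∀ j, (r (l j), r (l (j+1))) ∈ (hval dfU dfV (segmentOf x (l j) (l (j+1)))).1 :=
    fun j => ((hval_reach dfU dfV (hl.monotone (by omega)) _ _).1).2
      ⟨r, rfl, rfl, fun k _ _ => hrun k⟩
  -- flagged blocks are cofinal on the x side
  set XF : ℕ → Prop :=
    fun j => (r (l j), r (l (j+1))) ∈ (hval dfU dfV (segmentOf x (l j) (l (j+1)))).2 with hXF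
  have hXFcof : ∀ J0, ∃ j, J0 ≤ j ∧ XF j := by
    intro J0
    obtain ⟨n, hn1, hn2⟩ := hflag (l J0)
    obtain ⟨j, hj1, hj2⟩ := exists_block hl (le_trans (hl.monotone (Nat.zero_le J0)) hn1)
    refine ⟨j, ?_, ?_⟩
    · by_contra hcon
      push_neg at hcon
      have : l (j+1) ≤ l J0 := hl.monotone (by omega)
      omega
    · exact ((hval_reach dfU dfV (hl.monotone (by omega)) _ _).2).2
        ⟨r, rfl, rfl, fun k _ _ => hrun k, n, hj1, hj2, hn2⟩
  -- transfer to the y side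
  have huy : Reach dfU dfV y 0 (l' 0) (r 0) (r (l 0)) := by
    have := hux
    rw [h0] at this
    exact ((hval_reach dfU dfV (Nat.zero_le (l' 0)) _ _).1).1 this
  have hGw : ∀ j, ∃ g : ℕ → PSt Qu Qv, g (l' j) = r (l j) ∧ g (l' (j+1)) = r (l (j+1)) ∧
      (∀ k, l' j ≤ k → k < l' (j+1) → ∃ bo, Tstep dfU dfV bo (g k) (y k) (g (k+1))) ∧
      (XF j → ∃ k, l' j ≤ k ∧ k < l' (j+1) ∧ Tstep dfU dfV true (g k) (y k) (g (k+1))) := by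
    intro j
    by_cases hfj : XF j
    · have := hfj
      rw [hXF] at this
      simp only [hb j] at this
      obtain ⟨g, hg1, hg2, hg3, hg4⟩ :=
        ((hval_reach dfU dfV (hl'.monotone (by omega : j ≤ j + 1)) _ _).2).1 this
      exact ⟨g, hg1, hg2, hg3, fun _ => hg4⟩
    · have := hbx j
      simp only [hb j] at this
      obtain ⟨g, hg1, hg2, hg3⟩ :=
        ((hval_reach dfU dfV (hl'.monotone (by omega : j ≤ j + 1)) _ _).1).1 this
      exact ⟨g, hg1, hg2, hg3, fun h => absurd h hfj⟩
  choose G hG1 hG2 hG3 hG4 using hGw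
  obtain ⟨gu, hgu1, hgu2, hgu3⟩ := huy
  -- the glued run
  set r' : ℕ → PSt Qu Qv := fun n =>
    if n < l' 0 then gu n
    else G (Nat.findGreatest (fun j => l' j ≤ n) n) n with hr'
  have hr'u : ∀ n, n < l' 0 → r' n = gu n := by
    intro n hn; simp only [hr', if_pos hn]
  have hr'in : ∀ j n, l' j ≤ n → n < l' (j+1) → r' n = G j n := by
    intro j n h1 h2
    have h3 : l' 0 ≤ n := le_trans (hl'.monotone (Nat.zero_le j)) h1
    simp only [hr', if_neg (not_lt.2 h3)]
    rw [findGreatest_cut hl' h1 h2]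
  have hr'bd : ∀ j, r' (l' j) = r (l j) := by
    intro j
    have := hr'in j (l' j) le_rfl (hl' (by omega))
    rw [this, hG1]
  -- steps
  have hsteps : ∀ n, ∃ bo, Tstep dfU dfV bo (r' n) (y n) (r' (n+1)) := by
    intro n
    by_cases hc1 : n + 1 < l' 0
    · rw [hr'u n (by omega), hr'u (n+1) hc1]
      exact hgu3 n (Nat.zero_le n) (by omega)
    · by_cases hc2 : n + 1 = l' 0
      · rw [hr'u n (by omega)]
        have : r' (n+1) = gu (l' 0) := by
          rw [hc2, hr'bd 0, hgu2]
        rw [this, ← hc2]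
        exact hgu3 n (Nat.zero_le n) (by omega)
      · -- in a block
        have hn0 : l' 0 ≤ n := by omega
        obtain ⟨j, hj1, hj2⟩ := exists_block hl' hn0
        rw [hr'in j n hj1 hj2]
        by_cases hc3 : n + 1 < l' (j+1)
        · rw [hr'in j (n+1) (by omega) hc3]
          exact hG3 j n hj1 hj2
        · have hc4 : n + 1 = l' (j+1) := by omega
          have : r' (n+1) = G j (l' (j+1)) := by
            rw [hc4, hr'bd (j+1), hG2]
          rw [this, ← hc4]
          exact hG3 j n hj1 hj2
  refine ⟨r', ?_, hsteps, ?_⟩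
  · by_cases hc : 0 < l' 0
    · rw [hr'u 0 hc, hgu1]
      exact hinit
    · have hc0 : l' 0 = 0 := by omega
      have h1 : r' 0 = r (l 0) := by
        have := hr'bd 0
        rwa [hc0] at this
      -- hval of the x-prefix is the unit, so r (l 0) = r 0
      have h2 : (r 0, r (l 0)) ∈ (hval dfU dfV (segmentOf y 0 (l' 0))).1 := by
        rw [← h0]; exact hux
      rw [hc0, segmentOf_self, hval_nil] at h2
      have h3 : r (l 0) = r 0 := by
        have : (r 0, r (l 0)).1 = (r 0, r (l 0)).2 := h2
        simpa using this.symm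
      rw [h1, h3]
      exact hinit
  · intro N
    obtain ⟨j, hj1, hj2⟩ := hXFcof N
    obtain ⟨k, hk1, hk2, hk3⟩ := hG4 j hj2
    refine ⟨k, ?_, ?_⟩
    · calc N ≤ l' N := hl'.le_apply
        _ ≤ l' j := hl'.monotone hj1
        _ ≤ k := hk1
    · have e1 : r' k = G j k := hr'in j k hk1 hk2
      have e2 : r' (k+1) = G j (k+1) := by
        by_cases hc : k + 1 < l' (j+1)
        · exact hr'in j (k+1) (by omega) hc
        · have hc4 : k + 1 = l' (j+1) := by omega
          rw [hc4, hr'bd (j+1), hG2]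
      rw [e1, e2]
      exact hk3

end TX

end Stmt13
namespace Stmt13

section Profile

variable {C : Type} {nn : ℕ} {Qu Qv : Fin nn → Type}
variable (dfU : ∀ i, DFA C (Qu i)) (dfV : ∀ i, DFA C (Qv i))

/-- The profile "monoid" carrier. -/
abbrev Nt (Qu Qv : Fin nn → Type) : Type := Set (Set (Mw Qu Qv))

/-- Left quotient of a target set by a monoid element. -/
def minv (a : Mw Qu Qv) (A : Set (Mw Qu Qv)) : Set (Mw Qu Qv) := {z | mwMul a z ∈ A}

def ntMul (𝒜 ℬ : Nt Qu Qv) : Nt Qu Qv := {A | {a | minv a A ∈ ℬ} ∈ 𝒜}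

def ntOne : Nt Qu Qv := {A | mwOne ∈ A}

theorem minv_one (A : Set (Mw Qu Qv)) : minv mwOne A = A := by
  ext z
  show mwMul mwOne z ∈ A ↔ z ∈ A
  rw [mwMul_one_left]

theorem minv_mul (a b : Mw Qu Qv) (A : Set (Mw Qu Qv)) :
    minv (mwMul a b) A = minv b (minv a A) := by
  ext z
  show mwMul (mwMul a b) z ∈ A ↔ mwMul b z ∈ minv a A
  show _ ↔ mwMul a (mwMul b z) ∈ A
  rw [mwMul_assoc]

theorem ntMul_assoc (u v w : Nt Qu Qv) : ntMul (ntMul u v) w = ntMul u (ntMul v w) := by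
  show {A | {a | minv a A ∈ w} ∈ ntMul u v} = {A | {a | minv a A ∈ ntMul v w} ∈ u}
  ext A
  show {a | minv a A ∈ w} ∈ ntMul u v ↔ _
  show {b | minv b {a | minv a A ∈ w} ∈ v} ∈ u ↔ {a | {b | minv b (minv a A) ∈ w} ∈ v} ∈ u
  have : (fun b => minv b {a | minv a A ∈ w} ∈ v) = fun a => {b | minv b (minv a A) ∈ w} ∈ v := by
    funext a
    have : minv a {a' | minv a' A ∈ w} = {b | minv b (minv a A) ∈ w} := by
      ext b
      show minv (mwMul a b) A ∈ w ↔ _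
      rw [minv_mul]
      rfl
    rw [this]
  show (fun A' => A' ∈ u) {b | minv b {a | minv a A ∈ w} ∈ v} ↔ _
  rw [show {b | minv b {a | minv a A ∈ w} ∈ v} = {a | {b | minv b (minv a A) ∈ w} ∈ v} from this]

theorem ntMul_one_left (u : Nt Qu Qv) : ntMul ntOne u = u := by
  ext A
  show mwOne ∈ {a | minv a A ∈ u} ↔ A ∈ u
  show minv mwOne A ∈ u ↔ A ∈ u
  rw [minv_one]

theorem ntMul_one_right (u : Nt Qu Qv) : ntMul u ntOne = u := by
  ext A
  show {a | mwOne ∈ minv a A} ∈ u ↔ A ∈ u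
  have : {a : Mw Qu Qv | mwOne ∈ minv a A} = A := by
    ext a
    show mwMul a mwOne ∈ A ↔ a ∈ A
    rw [mwMul_one_right]
  rw [this]

variable (m : ℕ)

/-- The profile of a single branching letter. -/
def pbeta (a : Fin m) : Nt Qu Qv :=
  {A | ∃ S : Finset C, S.card = (a : ℕ) + 1 ∧ ∀ c ∈ S, mwOf dfU dfV c ∈ A}

/-- The profile of a branching word. -/
def PiB (b : List (Fin m)) : Nt Qu Qv :=
  b.foldr (fun a acc => ntMul (pbeta dfU dfV m a) acc) ntOne

theorem PiB_nil : PiB dfU dfV m ([] : List (Fin m)) = ntOne := rfl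

theorem PiB_cons (a : Fin m) (b : List (Fin m)) :
    PiB dfU dfV m (a :: b) = ntMul (pbeta dfU dfV m a) (PiB dfU dfV m b) := rfl

theorem PiB_append (b₁ b₂ : List (Fin m)) :
    PiB dfU dfV m (b₁ ++ b₂) = ntMul (PiB dfU dfV m b₁) (PiB dfU dfV m b₂) := by
  induction b₁ with
  | nil => rw [List.nil_append, PiB_nil, ntMul_one_left]
  | cons a b ih => rw [List.cons_append, PiB_cons, PiB_cons, ih, ntMul_assoc]

/-- Achievability semantics. -/
def AchSem : List (Fin m) → Set (Mw Qu Qv) → Prop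
  | [], A => mwOne ∈ A
  | a :: b, A => ∃ S : Finset C, S.card = (a : ℕ) + 1 ∧
      ∀ c ∈ S, AchSem b (minv (mwOf dfU dfV c) A)

theorem achSem_iff : ∀ (b : List (Fin m)) (A : Set (Mw Qu Qv)),
    AchSem dfU dfV m b A ↔ A ∈ PiB dfU dfV m b := by
  intro b
  induction b with
  | nil => intro A; rfl
  | cons a b ih =>
    intro A
    show (∃ S : Finset C, _ ∧ ∀ c ∈ S, AchSem dfU dfV m b (minv (mwOf dfU dfV c) A)) ↔
      {z | minv z A ∈ PiB dfU dfV m b} ∈ pbeta dfU dfV m a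
    constructor
    · rintro ⟨S, hS1, hS2⟩
      exact ⟨S, hS1, fun c hc => (ih _).1 (hS2 c hc)⟩
    · rintro ⟨S, hS1, hS2⟩
      exact ⟨S, hS1, fun c hc => (ih _).2 (hS2 c hc)⟩

theorem achSem_mono : ∀ (b : List (Fin m)) (A A' : Set (Mw Qu Qv)), A ⊆ A' →
    AchSem dfU dfV m b A → AchSem dfU dfV m b A' := by
  intro b
  induction b with
  | nil => intro A A' hs h; exact hs h
  | cons a b ih =>
    rintro A A' hs ⟨S, hS1, hS2⟩
    exact ⟨S, hS1, fun c hc => ih _ _ (fun z hz => hs hz) (hS2 c hc)⟩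

/-- The fibers of `PiB` are regular languages. -/
theorem PiB_regular [Fintype C] (instQu : ∀ i, Fintype (Qu i)) (instQv : ∀ i, Fintype (Qv i))
    (t : Nt Qu Qv) : IsRegularLang {w : List (Fin m) | PiB dfU dfV m w = t} := by
  classical
  haveI : ∀ i, Fintype (Qu i ⊕ Qv i) := fun i => by
    haveI := instQu i; haveI := instQv i; infer_instance
  haveI : Fintype (PSt Qu Qv) := by
    unfold PSt
    infer_instance
  haveI : Finite (Mw Qu Qv) := by
    unfold Mw
    infer_instance
  haveI : Finite (Nt Qu Qv) := by
    unfold Nt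
    haveI : Finite (Set (Mw Qu Qv)) := inferInstance
    infer_instance
  refine ⟨Nt Qu Qv, Fintype.ofFinite _,
    ⟨fun s a => ntMul s (pbeta dfU dfV m a), ntOne, {t}⟩, ?_⟩
  intro w
  rw [DFA.mem_accepts]
  have key : ∀ (w : List (Fin m)) (s : Nt Qu Qv),
      List.foldl (fun s a => ntMul s (pbeta dfU dfV m a)) s w = ntMul s (PiB dfU dfV m w) := by
    intro w
    induction w with
    | nil =>
      intro s
      rw [PiB_nil, ntMul_one_right]
      rfl
    | cons a b ih =>
      intro s
      rw [List.foldl_cons, ih, PiB_cons, ntMul_assoc]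
  show List.foldl _ ntOne w ∈ ({t} : Set (Nt Qu Qv)) ↔ _
  rw [key w ntOne, ntMul_one_left]
  simp only [Set.mem_singleton_iff, Set.mem_setOf_eq]

end Profile

end Stmt13
namespace Stmt13

theorem segmentOf_singleton {C : Type*} (x : ℕ → C) (a : ℕ) :
    segmentOf x a (a + 1) = [x a] := by
  rw [segmentOf_snoc x (le_refl a), segmentOf_self]
  rfl

theorem segmentOf_cons {C : Type*} (x : ℕ → C) {a b : ℕ} (h : a < b) :
    segmentOf x a b = x a :: segmentOf x (a + 1) b := by
  rw [segmentOf_append x (by omega : a ≤ a + 1) (by omega : a + 1 ≤ b), segmentOf_singleton]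
  rfl

theorem segmentOf_take {C : Type*} (x : ℕ → C) {a b i : ℕ} (h : a + i ≤ b) :
    (segmentOf x a b).take i = segmentOf x a (a + i) := by
  apply List.ext_getElem
  · simp [segmentOf_length]; omega
  · intro j h1 h2
    rw [List.getElem_take, segmentOf_getElem, segmentOf_getElem]

section Paths

variable {C : Type} {nn : ℕ} {Qu Qv : Fin nn → Type}
variable (dfU : ∀ i, DFA C (Qu i)) (dfV : ∀ i, DFA C (Qv i))

/-- `p` is a path of the selector `sel` starting at node `ν`. -/
def IsPath (sel : List C → Finset C) (ν : List C) (p : List C) : Prop :=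
  ∀ i : ℕ, ∀ hi : i < p.length, p[i] ∈ sel (ν ++ p.take i)

theorem isPath_append {sel : List C → Finset C} {u p : List C}
    (hu : IsPath sel [] u) (hp : IsPath sel u p) : IsPath sel [] (u ++ p) := by
  intro i hi
  simp only [List.length_append] at hi
  by_cases hiu : i < u.length
  · rw [List.getElem_append_left hiu, List.nil_append,
      List.take_append_of_le_length (by omega)]
    exact hu i hiu
  · rw [List.getElem_append_right (by omega), List.nil_append]
    have htake : (u ++ p).take i = u ++ p.take (i - u.length) := by
      rw [List.take_append, List.take_of_length_le (by omega)]
    rw [htake]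
    exact hp (i - u.length) (by omega)

/-- The set of `hval`-values of length-`Δ` paths of `sel` above `ν`. -/
def FragVals (sel : List C → Finset C) (ν : List C) (Δ : ℕ) : Set (Mw Qu Qv) :=
  {v | ∃ p : List C, p.length = Δ ∧ IsPath sel ν p ∧ hval dfU dfV p = v}

variable (m : ℕ)

/-- **Analysis lemma**: the exact value set of a winning selector's fragment is achievable. -/
theorem achSem_fragVals (β : ℕ → Fin m) (sel : List C → Finset C)
    (hsel : ∀ w : List C, (sel w).card = (β w.length : ℕ) + 1) :
    ∀ (d s : ℕ) (ν : List C), ν.length = s →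
    AchSem dfU dfV m (segmentOf β s (s + d)) (FragVals dfU dfV sel ν d) := by
  intro d
  induction d with
  | zero =>
    intro s ν hν
    rw [Nat.add_zero, segmentOf_self]
    show mwOne ∈ FragVals dfU dfV sel ν 0
    exact ⟨[], rfl, fun i hi => by simp at hi, hval_nil dfU dfV⟩
  | succ d ih =>
    intro s ν hν
    rw [segmentOf_cons β (by omega : s < s + (d+1))]
    refine ⟨sel ν, by rw [hsel ν, hν], ?_⟩
    intro c hc
    have harith : s + (d + 1) = (s + 1) + d := by omega
    rw [harith]
    apply achSem_mono dfU dfV m _ (FragVals dfU dfV sel (ν ++ [c]) d)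
    · -- inclusion into the quotient
      rintro v ⟨p, hp1, hp2, hp3⟩
      refine ⟨c :: p, by simp [hp1], ?_, by rw [hval_cons, hp3]⟩
      intro i hi
      cases i with
      | zero =>
        simp only [List.getElem_cons_zero, List.take_zero, List.append_nil]
        exact hc
      | succ i =>
        simp only [List.getElem_cons_succ, List.take_succ_cons]
        rw [show ν ++ (c :: p.take i) = (ν ++ [c]) ++ p.take i by simp]
        exact hp2 i (by simpa using hi)
    · exact ih (s+1) (ν ++ [c]) (by simp [hν])

/-- A finset of any size `a + 1 ≤ |C|`. -/
noncomputable def pickF [Fintype C] {m : ℕ} (hm : Fintype.card C = m) (a : Fin m) : Finset C :=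
  (Finset.exists_subset_card_eq (s := (Finset.univ : Finset C)) (n := (a : ℕ) + 1)
    (by simp [hm])).choose

theorem pickF_card [Fintype C] {m : ℕ} (hm : Fintype.card C = m) (a : Fin m) :
    (pickF hm a).card = (a : ℕ) + 1 :=
  (Finset.exists_subset_card_eq (s := (Finset.univ : Finset C)) (n := (a : ℕ) + 1)
    (by simp [hm])).choose_spec.2

/-- **Block lemma**: an achievable target set can be realized by a fragment selector. -/
theorem block_lemma [Fintype C] {m : ℕ} (hm : Fintype.card C = m) (β' : ℕ → Fin m) :
    ∀ (d s : ℕ) (A : Set (Mw Qu Qv)), AchSem dfU dfV m (segmentOf β' s (s + d)) A →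
    ∃ fsel : List C → Finset C,
      (∀ w : List C, (fsel w).card = (β' (s + w.length) : ℕ) + 1) ∧
      (∀ p : List C, p.length = d → IsPath fsel [] p → hval dfU dfV p ∈ A) := by
  classical
  intro d
  induction d with
  | zero =>
    intro s A hA
    rw [Nat.add_zero, segmentOf_self] at hA
    refine ⟨fun w => pickF hm (β' (s + w.length)), fun w => pickF_card hm _, ?_⟩
    intro p hp _
    rw [List.length_eq_zero_iff] at hp
    subst hp
    rw [hval_nil]
    exact hA
  | succ d ih =>
    intro s A hA
    rw [segmentOf_cons β' (by omega : s < s + (d+1)),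
      show s + (d + 1) = (s + 1) + d by omega] at hA
    obtain ⟨S, hS1, hS2⟩ := hA
    choose F hF1 hF2 using fun (c : C) (hc : c ∈ S) => ih (s+1) _ (hS2 c hc)
    refine ⟨fun w => match w with
      | [] => S
      | c :: w' => if h : c ∈ S then F c h w' else pickF hm (β' (s + (w'.length + 1))),
      ?_, ?_⟩
    · intro w
      match w with
      | [] => simpa using hS1
      | c :: w' =>
        have harith2 : s + (c :: w').length = (s + 1) + w'.length := by
          simp only [List.length_cons]
          omega
        by_cases h : c ∈ S
        · simp only [dif_pos h]
          rw [hF1 c h w', harith2]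
        · simp only [dif_neg h]
          rw [pickF_card hm, harith2, show s + (w'.length + 1) = s + 1 + w'.length by omega]
    · intro p hp hpath
      match p, hp with
      | c :: p', hp =>
        have hc : c ∈ S := by
          have := hpath 0 (by simp)
          simpa using this
        have hrel : IsPath (F c hc) [] p' := by
          intro i hi
          have := hpath (i+1) (by simpa using hi)
          simp only [List.getElem_cons_succ, List.nil_append, List.take_succ_cons] at this
          rw [dif_pos hc] at this
          exact this
        have := hF2 c hc p' (by simpa using hp) hrel
        rw [hval_cons]
        exact this

end Paths

end Stmt13
namespace Stmt13

section Machine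

attribute [local instance] Classical.propDecidable

variable {C : Type} [Fintype C] {nn : ℕ} {Qu Qv : Fin nn → Type}

/-- Block boundaries: `BB k 0 = 0`, `BB k (j+1) = k j`. -/
def BB (k : ℕ → ℕ) : ℕ → ℕ := fun j => Nat.rec 0 (fun j' _ => k j') j

theorem BB_zero (k : ℕ → ℕ) : BB k 0 = 0 := rfl

theorem BB_succ (k : ℕ → ℕ) (j : ℕ) : BB k (j+1) = k j := rfl

theorem BB_strictMono {k : ℕ → ℕ} (hk : StrictMono k) (h0 : 0 < k 0) : StrictMono (BB k) := by
  apply strictMono_nat_of_lt_succ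
  intro j
  cases j with
  | zero => exact h0
  | succ j => exact hk (by omega)

variable (dfU : ∀ i, DFA C (Qu i)) (dfV : ∀ i, DFA C (Qv i))
variable {m : ℕ} (hm : Fintype.card C = m)
variable (sel : List C → Finset C) (β' : ℕ → Fin m) (k k' : ℕ → ℕ)

/-- Choose a fragment selector for block `j` above anchor `ν`. -/
noncomputable def chooseFsel (j : ℕ) (ν : List C) : List C → Finset C :=
  if h : AchSem dfU dfV m (segmentOf β' (BB k' j) (BB k' j + (BB k' (j+1) - BB k' j)))
      (FragVals dfU dfV sel ν (BB k (j+1) - BB k j))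
  then (block_lemma dfU dfV hm β' (BB k' (j+1) - BB k' j) (BB k' j) _ h).choose
  else fun w => pickF hm (β' (BB k' j + w.length))

theorem chooseFsel_card (j : ℕ) (ν : List C) (w : List C) :
    ((chooseFsel dfU dfV hm sel β' k k' j ν) w).card = (β' (BB k' j + w.length) : ℕ) + 1 := by
  unfold chooseFsel
  split
  · next h => exact (block_lemma dfU dfV hm β' (BB k' (j+1) - BB k' j) (BB k' j) _ h).choose_spec.1 w
  · exact pickF_card hm _

theorem chooseFsel_path (j : ℕ) (ν : List C)
    (h : AchSem dfU dfV m (segmentOf β' (BB k' j) (BB k' j + (BB k' (j+1) - BB k' j)))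
      (FragVals dfU dfV sel ν (BB k (j+1) - BB k j)))
    (p : List C) (hp : p.length = BB k' (j+1) - BB k' j)
    (hpath : IsPath (chooseFsel dfU dfV hm sel β' k k' j ν) [] p) :
    hval dfU dfV p ∈ FragVals dfU dfV sel ν (BB k (j+1) - BB k j) := by
  have : chooseFsel dfU dfV hm sel β' k k' j ν =
      (block_lemma dfU dfV hm β' (BB k' (j+1) - BB k' j) (BB k' j) _ h).choose := by
    unfold chooseFsel
    rw [dif_pos h]
  rw [this] at hpath
  exact (block_lemma dfU dfV hm β' (BB k' (j+1) - BB k' j) (BB k' j) _ h).choose_spec.2 p hp hpath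

/-- Choose a path above `ν` realizing the value `v`. -/
noncomputable def pickPath (ν : List C) (Δ : ℕ) (v : Mw Qu Qv) : List C :=
  if h : v ∈ FragVals dfU dfV sel ν Δ then h.choose else []

theorem pickPath_spec {ν : List C} {Δ : ℕ} {v : Mw Qu Qv}
    (h : v ∈ FragVals dfU dfV sel ν Δ) :
    (pickPath dfU dfV sel ν Δ v).length = Δ ∧ IsPath sel ν (pickPath dfU dfV sel ν Δ v) ∧
      hval dfU dfV (pickPath dfU dfV sel ν Δ v) = v := by
  unfold pickPath
  rw [dif_pos h]
  exact h.choose_spec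

/-- Machine state. -/
structure MSt (C : Type) where
  bj : ℕ
  anchor : List C
  fsel : List C → Finset C
  off : List C

/-- Machine step. -/
noncomputable def mStep (st : MSt C) (c : C) : MSt C :=
  if BB k' (st.bj + 1) ≤ BB k' st.bj + (st.off ++ [c]).length then
    let ν' := st.anchor ++
      pickPath dfU dfV sel st.anchor (BB k (st.bj+1) - BB k st.bj)
        (hval dfU dfV (st.off ++ [c]))
    ⟨st.bj + 1, ν', chooseFsel dfU dfV hm sel β' k k' (st.bj + 1) ν', []⟩
  else ⟨st.bj, st.anchor, st.fsel, st.off ++ [c]⟩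

noncomputable def mInit : MSt C := ⟨0, [], chooseFsel dfU dfV hm sel β' k k' 0 [], []⟩

noncomputable def mstate (w : List C) : MSt C :=
  w.foldl (mStep dfU dfV hm sel β' k k') (mInit dfU dfV hm sel β' k k')

/-- The transferred selector. -/
noncomputable def sel2 : List C → Finset C :=
  fun w => (mstate dfU dfV hm sel β' k k' w).fsel ((mstate dfU dfV hm sel β' k k' w).off)

theorem mstate_snoc (w : List C) (c : C) :
    mstate dfU dfV hm sel β' k k' (w ++ [c]) =
      mStep dfU dfV hm sel β' k k' (mstate dfU dfV hm sel β' k k' w) c := by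
  unfold mstate
  rw [List.foldl_append]
  rfl

/-- Safety invariant of machine states. -/
def StInv (d : ℕ) (st : MSt C) : Prop :=
  BB k' st.bj + st.off.length = d ∧ d < BB k' (st.bj + 1) ∧
  ∀ u : List C, (st.fsel u).card = (β' (BB k' st.bj + u.length) : ℕ) + 1

theorem stInv_init (hk'0 : 0 < k' 0) :
    StInv β' k' 0 (mInit dfU dfV hm sel β' k k' : MSt C) := by
  refine ⟨by simp [mInit, BB_zero], ?_, ?_⟩
  · show (0:ℕ) < BB k' (0+1)
    rw [BB_succ]
    exact hk'0
  · intro u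
    exact chooseFsel_card dfU dfV hm sel β' k k' 0 [] u

theorem stInv_step (hk' : StrictMono k') {d : ℕ} {st : MSt C} {c : C}
    (h : StInv β' k' d st) : StInv β' k' (d+1) (mStep dfU dfV hm sel β' k k' st c) := by
  obtain ⟨h1, h2, h3⟩ := h
  unfold mStep
  split
  · next hcomp =>
    simp only [List.length_append, List.length_singleton] at hcomp
    have heq : BB k' (st.bj + 1) = d + 1 := by omega
    refine ⟨by simpa using heq, ?_, ?_⟩
    · show d + 1 < BB k' (st.bj + 1 + 1)
      have : BB k' (st.bj + 1) < BB k' (st.bj + 1 + 1) := by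
        rw [BB_succ, BB_succ]
        exact hk' (by omega)
      omega
    · intro u
      exact chooseFsel_card dfU dfV hm sel β' k k' _ _ u
  · next hcomp =>
    simp only [List.length_append, List.length_singleton] at hcomp
    exact ⟨by simp; omega, by simp; omega, h3⟩

theorem stInv_mstate (hk' : StrictMono k') (hk'0 : 0 < k' 0) (w : List C) :
    StInv β' k' w.length (mstate dfU dfV hm sel β' k k' w) := by
  induction w using List.reverseRecOn with
  | nil => exact stInv_init dfU dfV hm sel β' k k' hk'0
  | append_singleton w c ih =>
    rw [mstate_snoc]
    have := stInv_step dfU dfV hm sel β' k k' hk' (c := c) ih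
    simpa using this

theorem sel2_card (hk' : StrictMono k') (hk'0 : 0 < k' 0) (w : List C) :
    ((sel2 dfU dfV hm sel β' k k' w)).card = (β' w.length : ℕ) + 1 := by
  obtain ⟨h1, h2, h3⟩ := stInv_mstate dfU dfV hm sel β' k k' hk' hk'0 w
  unfold sel2
  rw [h3 _, h1]

end Machine

end Stmt13
namespace Stmt13

section Surgery

attribute [local instance] Classical.propDecidable

variable {C : Type} [Fintype C] {nn : ℕ} {Qu Qv : Fin nn → Type}
variable (dfU : ∀ i, DFA C (Qu i)) (dfV : ∀ i, DFA C (Qv i))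
variable {m : ℕ} (hm : Fintype.card C = m)
variable (sel : List C → Finset C) (β' : ℕ → Fin m) (k k' : ℕ → ℕ)

theorem mStep_pos (st : MSt C) (c : C)
    (h : BB k' (st.bj + 1) ≤ BB k' st.bj + (st.off ++ [c]).length) :
    mStep dfU dfV hm sel β' k k' st c =
      ⟨st.bj + 1,
       st.anchor ++ pickPath dfU dfV sel st.anchor (BB k (st.bj+1) - BB k st.bj)
         (hval dfU dfV (st.off ++ [c])),
       chooseFsel dfU dfV hm sel β' k k' (st.bj + 1)
         (st.anchor ++ pickPath dfU dfV sel st.anchor (BB k (st.bj+1) - BB k st.bj)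
           (hval dfU dfV (st.off ++ [c]))),
       []⟩ := by
  unfold mStep
  rw [if_pos h]

theorem mStep_neg (st : MSt C) (c : C)
    (h : ¬ BB k' (st.bj + 1) ≤ BB k' st.bj + (st.off ++ [c]).length) :
    mStep dfU dfV hm sel β' k k' st c = ⟨st.bj, st.anchor, st.fsel, st.off ++ [c]⟩ := by
  unfold mStep
  rw [if_neg h]

include hm in
/-- **Surgery**: transfer a winning selector along blockwise `PiB`-equal branching words. -/
theorem surgery (β : ℕ → Fin m)
    (hk : StrictMono k) (hk' : StrictMono k') (hk0 : 0 < k 0) (hk'0 : 0 < k' 0)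
    (hPiB : ∀ j, PiB dfU dfV m (segmentOf β (BB k j) (BB k (j+1))) =
      PiB dfU dfV m (segmentOf β' (BB k' j) (BB k' (j+1))))
    (hwin : SelWin {x | AccRun dfU dfV x} (fun n => (β n : ℕ))) :
    SelWin {x | AccRun dfU dfV x} (fun n => (β' n : ℕ)) := by
  obtain ⟨sel, hselc, hselwin⟩ := hwin
  have hBk : StrictMono (BB k) := BB_strictMono hk hk0
  have hBk' : StrictMono (BB k') := BB_strictMono hk' hk'0
  -- the key achievability transfer for a block
  have hach : ∀ j (ν : List C), ν.length = BB k j →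
      AchSem dfU dfV m (segmentOf β' (BB k' j) (BB k' j + (BB k' (j+1) - BB k' j)))
        (FragVals dfU dfV sel ν (BB k (j+1) - BB k j)) := by
    intro j ν hν
    have h1 := achSem_fragVals dfU dfV m β sel hselc (BB k (j+1) - BB k j) (BB k j) ν hν
    rw [show BB k j + (BB k (j+1) - BB k j) = BB k (j+1) by
      have := hBk (by omega : j < j+1); omega] at h1
    rw [achSem_iff, hPiB j, ← achSem_iff] at h1
    rw [show BB k' j + (BB k' (j+1) - BB k' j) = BB k' (j+1) by
      have := hBk' (by omega : j < j+1); omega]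
    exact h1
  refine ⟨sel2 dfU dfV hm sel β' k k', fun w => sel2_card dfU dfV hm sel β' k k' hk' hk'0 w, ?_⟩
  intro y' hy'
  -- notation
  set W : ℕ → List C := fun d => List.ofFn fun i : Fin d => y' i with hW
  set ST : ℕ → MSt C := fun d => mstate dfU dfV hm sel β' k k' (W d) with hST
  have hWsnoc : ∀ d, W (d+1) = W d ++ [y' d] := fun d => ofFn_snoc y' d
  have hSTsnoc : ∀ d, ST (d+1) = mStep dfU dfV hm sel β' k k' (ST d) (y' d) := by
    intro d
    show mstate dfU dfV hm sel β' k k' (W (d+1)) = _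
    rw [hWsnoc d, mstate_snoc]
  -- the Good predicate
  set Good : ℕ → Prop := fun j =>
    (ST (BB k' j)).bj = j ∧ (ST (BB k' j)).off = [] ∧
    (ST (BB k' j)).anchor.length = BB k j ∧
    IsPath sel [] (ST (BB k' j)).anchor ∧
    (ST (BB k' j)).fsel =
      chooseFsel dfU dfV hm sel β' k k' j (ST (BB k' j)).anchor with hGood
  have hW0 : W 0 = [] := by
    simp [hW]
  have h00 : ST (BB k' 0) = mInit dfU dfV hm sel β' k k' := by
    show mstate dfU dfV hm sel β' k k' (W (BB k' 0)) = _
    rw [BB_zero, hW0]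
    rfl
  have good0 : Good 0 := by
    refine ⟨?_, ?_, ?_, ?_, ?_⟩ <;> rw [h00]
    · rfl
    · rfl
    · rfl
    · intro i hi
      simp only [mInit, List.length_nil] at hi
      omega
    · rfl
  -- step lemma
  have step_lemma : ∀ j, Good j → Good (j+1) ∧
      ∃ q : List C, (ST (BB k' (j+1))).anchor = (ST (BB k' j)).anchor ++ q ∧
        q.length = BB k (j+1) - BB k j ∧
        hval dfU dfV q = hval dfU dfV (segmentOf y' (BB k' j) (BB k' (j+1))) := by
    intro j hg
    obtain ⟨hg1, hg2, hg3, hg4, hg5⟩ := hg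
    set d0 := BB k' j with hd0
    set d1 := BB k' (j+1) with hd1
    have hd01 : d0 < d1 := hBk' (by omega : j < j+1)
    set ν := (ST d0).anchor with hν
    set fs := chooseFsel dfU dfV hm sel β' k k' j ν with hfs
    have hachj := hach j ν hg3
    -- tracking within the block
    have track : ∀ d, d0 ≤ d → d < d1 →
        (ST d).bj = j ∧ (ST d).anchor = ν ∧ (ST d).fsel = fs ∧
        (ST d).off = segmentOf y' d0 d := by
      intro d hd hd'
      induction d, hd using Nat.le_induction with
      | base => exact ⟨hg1, rfl, hg5, by rw [segmentOf_self]; exact hg2⟩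
      | succ d hd ih =>
        obtain ⟨ih1, ih2, ih3, ih4⟩ := ih (by omega)
        rw [hSTsnoc d]
        have hoff : (ST d).off ++ [y' d] = segmentOf y' d0 (d+1) := by
          rw [ih4, ← segmentOf_snoc y' hd]
        have hnc : ¬ BB k' ((ST d).bj + 1) ≤ BB k' (ST d).bj + ((ST d).off ++ [y' d]).length := by
          rw [ih1, hoff]
          rw [segmentOf_length]
          omega
        rw [mStep_neg dfU dfV hm sel β' k k' _ _ hnc]
        exact ⟨ih1, ih2, ih3, hoff⟩
    -- the in-block selections give a path of fs
    have hbranchin : ∀ i, d0 + i < d1 → y' (d0 + i) ∈ fs (segmentOf y' d0 (d0 + i)) := by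
      intro i hi
      have hb := hy' (d0 + i)
      obtain ⟨t1, t2, t3, t4⟩ := track (d0 + i) (by omega) hi
      show y' (d0+i) ∈ _
      have : sel2 dfU dfV hm sel β' k k' (W (d0+i)) = fs (segmentOf y' d0 (d0+i)) := by
        unfold sel2
        show (ST (d0+i)).fsel (ST (d0+i)).off = _
        rw [t3, t4]
      rw [← this]
      exact hb
    have hfull : IsPath fs [] (segmentOf y' d0 d1) := by
      intro i hi
      rw [segmentOf_length] at hi
      rw [List.nil_append, segmentOf_getElem, segmentOf_take y' (by omega)]
      exact hbranchin i (by omega)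
    have hvmem : hval dfU dfV (segmentOf y' d0 d1) ∈
        FragVals dfU dfV sel ν (BB k (j+1) - BB k j) := by
      apply chooseFsel_path dfU dfV hm sel β' k k' j ν hachj
      · rw [segmentOf_length]
      · exact hfull
    -- the completion step
    have hlast := hSTsnoc (d1 - 1)
    rw [show d1 - 1 + 1 = d1 by omega] at hlast
    obtain ⟨t1, t2, t3, t4⟩ := track (d1 - 1) (by omega) (by omega)
    have hoff : (ST (d1-1)).off ++ [y' (d1-1)] = segmentOf y' d0 d1 := by
      rw [t4, ← segmentOf_snoc y' (by omega : d0 ≤ d1 - 1),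
        show d1 - 1 + 1 = d1 by omega]
    have hcomp : BB k' ((ST (d1-1)).bj + 1) ≤ BB k' (ST (d1-1)).bj + ((ST (d1-1)).off ++ [y' (d1-1)]).length := by
      rw [t1, hoff, segmentOf_length]
      omega
    rw [mStep_pos dfU dfV hm sel β' k k' _ _ hcomp] at hlast
    rw [t1, t2, hoff] at hlast
    set q := pickPath dfU dfV sel ν (BB k (j+1) - BB k j) (hval dfU dfV (segmentOf y' d0 d1))
      with hq
    obtain ⟨hq1, hq2, hq3⟩ := pickPath_spec dfU dfV sel hvmem
    -- conclude
    have anch : (ST d1).anchor = ν ++ q := by rw [hlast]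
    refine ⟨⟨?_, ?_, ?_, ?_, ?_⟩, q, anch, hq1, hq3⟩ <;> rw [← hd1]
    · rw [hlast]
    · rw [hlast]
    · rw [anch]
      simp only [List.length_append]
      rw [hg3, hq1]
      have := hBk (by omega : j < j+1)
      omega
    · rw [anch]
      exact isPath_append hg4 hq2
    · rw [hlast]
  have good : ∀ j, Good j := by
    intro j
    induction j with
    | zero => exact good0
    | succ j ih => exact (step_lemma j ih).1
  have chain : ∀ j, ∃ q : List C, (ST (BB k' (j+1))).anchor = (ST (BB k' j)).anchor ++ q ∧
      q.length = BB k (j+1) - BB k j ∧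
      hval dfU dfV q = hval dfU dfV (segmentOf y' (BB k' j) (BB k' (j+1))) :=
    fun j => (step_lemma j (good j)).2
  -- build the limit branch of `sel`
  have hCne : Nonempty C := by
    rw [← Fintype.card_pos_iff, hm]
    have := (β' 0).isLt
    omega
  set cd : C := Classical.choice hCne with hcd
  set AA : ℕ → List C := fun j => (ST (BB k' j)).anchor with hAA
  have hAAlen : ∀ j, (AA j).length = BB k j := fun j => (good j).2.2.1
  have hAApre : ∀ j, AA j <+: AA (j+1) := by
    intro j
    obtain ⟨q, hq, _, _⟩ := chain j
    exact ⟨q, hq.symm⟩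
  have hAApre' : ∀ j j', j ≤ j' → AA j <+: AA j' := by
    intro j j' hjj
    induction j', hjj using Nat.le_induction with
    | base => exact List.prefix_refl _
    | succ j' h ih => exact ih.trans (hAApre j')
  have hklow : ∀ n, n + 1 ≤ k n := by
    intro n
    induction n with
    | zero => omega
    | succ n ih =>
      have : k n < k (n+1) := hk (by omega)
      omega
  set yT : ℕ → C := fun n => (AA (n+1)).getD n cd with hyT
  have hyTval : ∀ j n, ∀ h : n < (AA j).length, yT n = (AA j)[n] := by
    intro j n h
    have hn1 : n < (AA (n+1)).length := by
      rw [hAAlen, BB_succ]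
      exact hklow n
    show (AA (n+1)).getD n cd = _
    rcases le_total j (n+1) with hj | hj
    · rw [List.getD_eq_getElem _ _ hn1, ← (hAApre' j (n+1) hj).getElem h]
    · rw [List.getD_eq_getElem _ _ hn1, (hAApre' (n+1) j hj).getElem hn1]
  -- yT is a branch of sel
  have hyTbranch : IsBranch sel yT := by
    intro n
    have hn1 : n < (AA (n+1)).length := by
      rw [hAAlen, BB_succ]; exact hklow n
    have hofn : (List.ofFn fun i : Fin n => yT i) = (AA (n+1)).take n := by
      apply List.ext_getElem
      · simp [hn1.le]
      · intro i h1 h2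
        rw [List.getElem_take, List.getElem_ofFn]
        have hi : i < n := by simpa using h1
        exact hyTval (n+1) i (lt_trans hi hn1)
    rw [hofn, hyTval (n+1) n hn1]
    have := (good (n+1)).2.2.2.1 n (by rw [hAAlen, BB_succ]; exact hklow n)
    rw [List.nil_append] at this
    exact this
  have hyTacc : AccRun dfU dfV yT := hselwin yT hyTbranch
  -- segments of yT match the chain pieces
  have hseg : ∀ j, hval dfU dfV (segmentOf yT (BB k j) (BB k (j+1))) =
      hval dfU dfV (segmentOf y' (BB k' j) (BB k' (j+1))) := by
    intro j
    obtain ⟨q, hq, hqlen, hqval⟩ := chain j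
    have : segmentOf yT (BB k j) (BB k (j+1)) = q := by
      apply List.ext_getElem
      · rw [segmentOf_length, hqlen]
      · intro i h1 h2
        rw [segmentOf_getElem]
        have hlt : BB k j + i < (AA (j+1)).length := by
          rw [hAAlen]
          rw [segmentOf_length] at h1
          have := hBk (by omega : j < j+1)
          omega
        rw [hyTval (j+1) _ hlt]
        show (AA (j+1))[BB k j + i]'hlt = q[i]
        have : AA (j+1) = AA j ++ q := hq
        rw [List.getElem_of_eq this hlt, List.getElem_append_right (by rw [hAAlen]; omega)]
        congr 1
        rw [hAAlen]
        omega
    rw [this, hqval]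
  -- transfer the accepting run
  show AccRun dfU dfV y'
  apply transfer_accRun hk hk' ?_ ?_ hyTacc
  · have := hseg 0
    rw [BB_zero, BB_zero, BB_succ, BB_succ] at this
    exact this
  · intro j
    have := hseg (j+1)
    rw [BB_succ, BB_succ, BB_succ, BB_succ] at this
    exact this

end Surgery

end Stmt13
namespace Stmt13

theorem stmt13_main {C : Type} [Fintype C] (m : ℕ) (hm : Fintype.card C = m)
    (X : Set (ℕ → C)) (hX : IsOmegaRegular X) :
    IsOmegaRegular { β : ℕ → Fin m | (fun n => (β n : ℕ)) ∈ winningShift X } := by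
  classical
  obtain ⟨nn, Us, Vs, hreg, rfl⟩ := hX
  choose Qu instQu dfU hdfU using fun i => (hreg i).1
  choose Qv instQv dfV hdfV using fun i => (hreg i).2
  have hsetU : ∀ i, ((dfU i).accepts : Set (List C)) = Us i :=
    fun i => Set.ext fun w => hdfU i w
  have hsetV : ∀ i, ((dfV i).accepts : Set (List C)) = Vs i :=
    fun i => Set.ext fun w => hdfV i w
  -- the union is the accepting-run language
  have hXeq : (⋃ i, omegaIter (Us i) (Vs i)) = {x | AccRun dfU dfV x} := by
    ext x
    constructor
    · intro hx
      rw [Set.mem_iUnion] at hx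
      obtain ⟨i, k, hk, hU, hV⟩ := hx
      rw [← hsetU i] at hU
      have hV' : ∀ j, segmentOf x (k j) (k (j+1)) ∈ (dfV i).accepts := by
        intro j
        rw [hdfV i]
        exact hV j
      exact accRun_of_mem dfU dfV hk hU hV'
    · intro hx
      obtain ⟨i, hx⟩ := mem_of_accRun hx
      rw [Set.mem_iUnion]
      rw [hsetU i, hsetV i] at hx
      exact ⟨i, hx⟩
  -- finiteness of the profile monoid
  haveI : ∀ i, Fintype (Qu i ⊕ Qv i) := fun i => by
    haveI := instQu i; haveI := instQv i; infer_instance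
  haveI : Fintype (PSt Qu Qv) := by unfold PSt; infer_instance
  haveI : Finite (Mw Qu Qv) := by unfold Mw; infer_instance
  haveI hNtFin : Finite (Nt Qu Qv) := by
    unfold Nt
    haveI : Finite (Set (Mw Qu Qv)) := inferInstance
    infer_instance
  -- the pair set
  set L : Nt Qu Qv → Set (List (Fin m)) := fun t => {w | PiB dfU dfV m w = t} with hL
  set WS : Set (ℕ → Fin m) :=
    { β : ℕ → Fin m | (fun n => (β n : ℕ)) ∈ winningShift (⋃ i, omegaIter (Us i) (Vs i)) }
    with hWS
  set PF : Set (Nt Qu Qv × Nt Qu Qv) :=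
    {p | (omegaIter (L p.1) (L p.2) ∩ WS).Nonempty} with hPF
  -- characterization
  have hchar : WS = ⋃ p ∈ PF, omegaIter (L p.1) (L p.2) := by
    apply Set.Subset.antisymm
    · -- Ramsey direction
      intro β hβ
      obtain ⟨g, hg, f0, hf0⟩ :=
        ramsey_pairs (κ := Nt Qu Qv) (fun a b => PiB dfU dfV m (segmentOf β a b))
      have hmem : β ∈ omegaIter (L (PiB dfU dfV m (segmentOf β 0 (g 0)))) (L f0) := by
        refine ⟨g, hg, rfl, ?_⟩
        intro j
        exact hf0 j (j+1) (by omega)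
      simp only [Set.mem_iUnion]
      exact ⟨(PiB dfU dfV m (segmentOf β 0 (g 0)), f0), ⟨β, hmem, hβ⟩, hmem⟩
    · -- surgery direction
      intro β' hβ'
      simp only [Set.mem_iUnion] at hβ'
      obtain ⟨⟨t, f⟩, hp, hβ'mem⟩ := hβ'
      obtain ⟨β, hβmem, hβW⟩ := hp
      obtain ⟨k, hk, hkU, hkV⟩ := hβmem
      obtain ⟨k', hk', hk'U, hk'V⟩ := hβ'mem
      -- shift the cut sequences to make the first cut positive
      set K : ℕ → ℕ := fun j => k (j+1) with hK
      set K' : ℕ → ℕ := fun j => k' (j+1) with hK'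
      have hKs : StrictMono K := fun a b hab => hk (by omega)
      have hK's : StrictMono K' := fun a b hab => hk' (by omega)
      have hK0 : 0 < K 0 := by
        show 0 < k 1
        have := hk (by omega : 0 < 1)
        omega
      have hK'0 : 0 < K' 0 := by
        show 0 < k' 1
        have := hk' (by omega : 0 < 1)
        omega
      have hPiBeq : ∀ j, PiB dfU dfV m (segmentOf β (BB K j) (BB K (j+1))) =
          PiB dfU dfV m (segmentOf β' (BB K' j) (BB K' (j+1))) := by
        intro j
        cases j with
        | zero =>
          show PiB dfU dfV m (segmentOf β 0 (k 1)) = PiB dfU dfV m (segmentOf β' 0 (k' 1))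
          rw [segmentOf_append β (Nat.zero_le (k 0)) (le_of_lt (hk (by omega : 0 < 1))),
            segmentOf_append β' (Nat.zero_le (k' 0)) (le_of_lt (hk' (by omega : 0 < 1))),
            PiB_append, PiB_append, hkU, hk'U, hkV 0, hk'V 0]
        | succ j =>
          show PiB dfU dfV m (segmentOf β (k (j+1)) (k (j+2))) =
            PiB dfU dfV m (segmentOf β' (k' (j+1)) (k' (j+2)))
          rw [hkV (j+1), hk'V (j+1)]
      -- apply the surgery
      have hβWsel : SelWin {x | AccRun dfU dfV x} (fun n => (β n : ℕ)) := by
        have := selWin_of_winning (X := ⋃ i, omegaIter (Us i) (Vs i)) hβW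
        rwa [hXeq] at this
      have hβ'Wsel := surgery dfU dfV hm β' K K' β hKs hK's hK0 hK'0 hPiBeq hβWsel
      show (fun n => ((β' n : ℕ))) ∈ winningShift (⋃ i, omegaIter (Us i) (Vs i))
      apply winning_of_selWin
      rwa [hXeq]
  -- index the finitely many pairs
  have hPFfin : PF.Finite := Set.toFinite PF
  set F : Finset (Nt Qu Qv × Nt Qu Qv) := hPFfin.toFinset with hF
  set e : Fin F.card ≃ {x // x ∈ F} := F.equivFin.symm with he
  refine ⟨F.card, fun i => L ((e i).1.1), fun i => L ((e i).1.2), ?_, ?_⟩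
  · intro i
    constructor
    · exact PiB_regular dfU dfV m instQu instQv _
    · exact PiB_regular dfU dfV m instQu instQv _
  · rw [hchar]
    ext β
    simp only [Set.mem_iUnion]
    constructor
    · rintro ⟨p, hp, hmem⟩
      have hpF : p ∈ F := (Set.Finite.mem_toFinset hPFfin).mpr hp
      refine ⟨e.symm ⟨p, hpF⟩, ?_⟩
      have : e (e.symm ⟨p, hpF⟩) = ⟨p, hpF⟩ := e.apply_symm_apply _
      rw [this]
      exact hmem
    · rintro ⟨i, hmem⟩
      refine ⟨(e i).1, ?_, hmem⟩
      exact (Set.Finite.mem_toFinset hPFfin).mp (e i).2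

end Stmt13

/-- If `X ⊆ C^ℕ` is ω-regular (`|C| = m`), then the winning shift `W(X)`,
viewed as a subset of `{0, …, m-1}^ℕ`, is ω-regular. -/
theorem stmt13 {C : Type} [Fintype C] (m : ℕ) (hm : Fintype.card C = m)
    (X : Set (ℕ → C)) (hX : IsOmegaRegular X) :
    IsOmegaRegular { β : ℕ → Fin m | (fun n => (β n : ℕ)) ∈ winningShift X } :=
  Stmt13.stmt13_main m hm X hX
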